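/- arXiv:1603.01179 — 2 statements merged into one kernel-verified Lean document; each statement's English description precedes it below -/
import Mathlib

section
/- For every 3SAT formula φ on n boolean variables (n even, n ≥ 4), every diametral path of G(φ) contains all the vertices V₁,…,V_{2n}, contains, for each i with 1 ≤ i ≤ n, exactly one of the two literal vertices X_i and X̄_i, and contains no clause vertex and no internal vertex of a clause-connecting path. -/
open SimpleGraph

/-- Vertices of the graph `G(φ)` associated with a 3SAT formula `φ` with `m` clauses over `n`
boolean variables (`n` even):
* `lit i b` is the literal vertex `X_{i+1}` (if `b = true`) or `X̄_{i+1}` (if `b = false`);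
* `chain k` is the vertex `V_{k+1}` of the two pending chains `V₁ — ⋯ — V_n` and
  `V_{n+1} — ⋯ — V_{2n}`;
* `clause j` is the vertex of the clause `C_{j+1}`;
* `inner j t s` is the `(s+1)`-st internal vertex of the path of length `n/2 + 1` (with `n/2`
  internal vertices) joining the clause vertex `C_{j+1}` to the vertex of its `(t+1)`-st
  literal. -/
inductive Vert (n m : ℕ) : Type
  | lit : Fin n → Bool → Vert n m
  | chain : Fin (2 * n) → Vert n m
  | clause : Fin m → Vert n m
  | inner : Fin m → Fin 3 → Fin (n / 2) → Vert n m
  deriving DecidableEq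

/-- The base (asymmetric) adjacency relation of `G(φ)`, where the 3SAT formula `φ` assigns to
each clause index `j` and each slot `t ∈ {0,1,2}` a literal `φ j t = (i, b)` (variable index
`i`, polarity `b`):
* `X_i` and `X̄_i` are adjacent, and every vertex of `{X_i, X̄_i}` is adjacent to every vertex
  of `{X_{i+1}, X̄_{i+1}}`;
* `V₁ — ⋯ — V_n` and `V_{n+1} — ⋯ — V_{2n}` are paths, `V_n` is moreover adjacent to both
  `X₁, X̄₁` and `V_{n+1}` to both `X_n, X̄_n`;
* each clause vertex `C_j` is joined to the vertex of each of its literals by a path of length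
  `n/2 + 1` whose `n/2` internal vertices are the `inner j t s`. -/
def satRel (n m : ℕ) (φ : Fin m → Fin 3 → Fin n × Bool) : Vert n m → Vert n m → Prop
  | .lit i b, .lit i' b' => (i = i' ∧ b ≠ b') ∨ (i : ℕ) + 1 = (i' : ℕ)
  | .chain k, .chain k' => (k : ℕ) + 1 = (k' : ℕ) ∧ (k' : ℕ) ≠ n
  | .chain k, .lit i _ => ((k : ℕ) = n - 1 ∧ (i : ℕ) = 0) ∨ ((k : ℕ) = n ∧ (i : ℕ) = n - 1)
  | .clause j, .inner j' _ s => j = j' ∧ (s : ℕ) = 0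
  | .inner j t s, .inner j' t' s' => j = j' ∧ t = t' ∧ (s : ℕ) + 1 = (s' : ℕ)
  | .inner j t s, .lit i b => (s : ℕ) = n / 2 - 1 ∧ φ j t = (i, b)
  | _, _ => False

/-- The graph `G(φ)` associated with a 3SAT formula `φ`. -/
def Gphi (n m : ℕ) (φ : Fin m → Fin 3 → Fin n × Bool) : SimpleGraph (Vert n m) :=
  SimpleGraph.fromRel (satRel n m φ)

set_option linter.all false
namespace GphiProof

variable {n m : ℕ} (φ : Fin m → Fin 3 → Fin n × Bool)

def Mmin (j : Fin m) : ℕ :=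
  min (min ((φ j 0).1 : ℕ) ((φ j 1).1 : ℕ)) ((φ j 2).1 : ℕ)

def Mmax (j : Fin m) : ℕ :=
  max (max ((φ j 0).1 : ℕ) ((φ j 1).1 : ℕ)) ((φ j 2).1 : ℕ)

lemma Mmin_le (j : Fin m) (t : Fin 3) : Mmin φ j ≤ ((φ j t).1 : ℕ) := by
  fin_cases t <;> simp [Mmin] <;> omega

lemma le_Mmax (j : Fin m) (t : Fin 3) : ((φ j t).1 : ℕ) ≤ Mmax φ j := by
  fin_cases t <;> simp [Mmax] <;> omega

lemma Mmax_lt (j : Fin m) : Mmax φ j < n := by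
  have := ((φ j 0).1).isLt; have := ((φ j 1).1).isLt; have := ((φ j 2).1).isLt
  simp only [Mmax, max_lt_iff]; omega

lemma Mmin_le_Mmax (j : Fin m) : Mmin φ j ≤ Mmax φ j :=
  le_trans (Mmin_le φ j 0) (le_Mmax φ j 0)

def fpot : Vert n m → ℕ
  | .chain k => if (k : ℕ) < n then k else k + n
  | .lit i _ => n + i
  | .clause j => n + Mmin φ j + n / 2 + 1
  | .inner j t s => n + min (((φ j t).1 : ℕ) + (n / 2 - s)) (Mmin φ j + n / 2 + 2 + s)

def gpot : Vert n m → ℕ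
  | .chain k => if (k : ℕ) < n then 3 * n - 1 - k else 2 * n - 1 - k
  | .lit i _ => 2 * n - 1 - i
  | .clause j => 2 * n + n / 2 - Mmax φ j
  | .inner j t s =>
      min ((2 * n - 1 - ((φ j t).1 : ℕ)) + (n / 2 - s)) (2 * n + n / 2 - Mmax φ j + s + 1)

lemma lip_f {x y : Vert n m} (h : satRel n m φ x y) :
    fpot φ y ≤ fpot φ x + 1 ∧ fpot φ x ≤ fpot φ y + 1 := by
  cases x with
  | lit i b =>
    cases y with
    | lit i' b' =>
      simp only [satRel] at h
      have := i.isLt; have := i'.isLt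
      rcases h with ⟨rfl, -⟩ | h <;> simp [fpot] <;> omega
    | _ => exact h.elim
  | chain k =>
    cases y with
    | chain k' =>
      simp only [satRel] at h
      have := k.isLt; have := k'.isLt
      simp only [fpot]; split_ifs <;> omega
    | lit i b =>
      simp only [satRel] at h
      have := k.isLt; have := i.isLt
      simp only [fpot]; split_ifs <;> omega
    | _ => exact h.elim
  | clause j =>
    cases y with
    | inner j' t s =>
      simp only [satRel] at h
      obtain ⟨rfl, hs⟩ := h
      have h1 := Mmin_le φ j t
      have := s.isLt; have := ((φ j t).1).isLt
      simp only [fpot]; omega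
    | _ => exact h.elim
  | inner j t s =>
    cases y with
    | inner j' t' s' =>
      simp only [satRel] at h
      obtain ⟨rfl, rfl, hs⟩ := h
      have h1 := Mmin_le φ j t
      have := s.isLt; have := s'.isLt; have := ((φ j t).1).isLt
      simp only [fpot]; omega
    | lit i b =>
      simp only [satRel] at h
      obtain ⟨hs, hφ⟩ := h
      have h1 := Mmin_le φ j t
      have := s.isLt; have := i.isLt
      simp only [fpot, hφ]; omega
    | _ => exact h.elim

lemma lip_g {x y : Vert n m} (h : satRel n m φ x y) :
    gpot φ y ≤ gpot φ x + 1 ∧ gpot φ x ≤ gpot φ y + 1 := by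
  cases x with
  | lit i b =>
    cases y with
    | lit i' b' =>
      simp only [satRel] at h
      have := i.isLt; have := i'.isLt
      rcases h with ⟨rfl, -⟩ | h <;> simp [gpot] <;> omega
    | _ => exact h.elim
  | chain k =>
    cases y with
    | chain k' =>
      simp only [satRel] at h
      have := k.isLt; have := k'.isLt
      simp only [gpot]; split_ifs <;> omega
    | lit i b =>
      simp only [satRel] at h
      have := k.isLt; have := i.isLt
      simp only [gpot]; split_ifs <;> omega
    | _ => exact h.elim
  | clause j =>
    cases y with
    | inner j' t s =>
      simp only [satRel] at h
      obtain ⟨rfl, hs⟩ := h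
      have h1 := le_Mmax φ j t
      have h2 := Mmax_lt φ j
      have := s.isLt; have := ((φ j t).1).isLt
      simp only [gpot]; omega
    | _ => exact h.elim
  | inner j t s =>
    cases y with
    | inner j' t' s' =>
      simp only [satRel] at h
      obtain ⟨rfl, rfl, hs⟩ := h
      have h1 := le_Mmax φ j t
      have h2 := Mmax_lt φ j
      have := s.isLt; have := s'.isLt; have := ((φ j t).1).isLt
      simp only [gpot]; omega
    | lit i b =>
      simp only [satRel] at h
      obtain ⟨hs, hφ⟩ := h
      have h1 := le_Mmax φ j t
      have h2 := Mmax_lt φ j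
      have := s.isLt; have := i.isLt
      simp only [gpot, hφ] at h1 ⊢; omega
    | _ => exact h.elim

lemma lip_f' {x y : Vert n m} (h : (Gphi n m φ).Adj x y) : fpot φ y ≤ fpot φ x + 1 := by
  rw [Gphi, SimpleGraph.fromRel_adj] at h
  rcases h.2 with h | h
  · exact (lip_f φ h).1
  · exact (lip_f φ h).2

lemma lip_g' {x y : Vert n m} (h : (Gphi n m φ).Adj x y) : gpot φ y ≤ gpot φ x + 1 := by
  rw [Gphi, SimpleGraph.fromRel_adj] at h
  rcases h.2 with h | h
  · exact (lip_g φ h).1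
  · exact (lip_g φ h).2

/-- On chain and literal vertices, `fpot + gpot = 3n - 1`; on gadget vertices it is `≥ 3n`. -/
lemma fg_chain (k : Fin (2 * n)) (hn : 0 < n) :
    fpot φ (.chain k) + gpot φ (.chain k) = 3 * n - 1 := by
  have := k.isLt
  simp only [fpot, gpot]; split_ifs <;> omega

lemma fg_lit (i : Fin n) (b : Bool) : fpot φ (.lit i b) + gpot φ (.lit i b) = 3 * n - 1 := by
  have := i.isLt; simp only [fpot, gpot]; omega

lemma fg_clause (j : Fin m) : 3 * n ≤ fpot φ (.clause j) + gpot φ (.clause j) := by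
  have h2 := Mmax_lt φ j
  simp only [fpot, gpot]; omega

lemma fg_inner (j : Fin m) (t : Fin 3) (s : Fin (n / 2)) :
    3 * n ≤ fpot φ (.inner j t s) + gpot φ (.inner j t s) := by
  have h1 := Mmin_le φ j t
  have h2 := le_Mmax φ j t
  have h3 := Mmax_lt φ j
  have := s.isLt; have := ((φ j t).1).isLt
  simp only [fpot, gpot]; omega

lemma fpot_le_of_walk {x y : Vert n m} (p : (Gphi n m φ).Walk x y) :
    fpot φ y ≤ fpot φ x + p.length := by
  induction p with
  | nil => simp
  | cons h q ih =>
    rename_i a b c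
    calc fpot φ c ≤ fpot φ b + q.length := ih
    _ ≤ fpot φ a + 1 + q.length := by have := lip_f' φ h; omega
    _ = fpot φ a + (SimpleGraph.Walk.cons h q).length := by
        simp [SimpleGraph.Walk.length_cons]; omega

lemma edist_le_one {x y : Vert n m} (hne : x ≠ y) (h : satRel n m φ x y) :
    (Gphi n m φ).edist x y ≤ 1 := by
  have : (Gphi n m φ).Adj x y := by
    rw [Gphi, SimpleGraph.fromRel_adj]; exact ⟨hne, Or.inl h⟩
  exact (SimpleGraph.edist_eq_one_iff_adj.mpr this).le

lemma edist_le_trans {x y z : Vert n m} {a b : ℕ}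
    (h1 : (Gphi n m φ).edist x y ≤ (a : ℕ∞)) (h2 : (Gphi n m φ).edist y z ≤ (b : ℕ∞)) :
    (Gphi n m φ).edist x z ≤ ((a + b : ℕ) : ℕ∞) :=
  calc (Gphi n m φ).edist x z ≤ _ + _ := SimpleGraph.edist_triangle
  _ ≤ (a : ℕ∞) + (b : ℕ∞) := add_le_add h1 h2
  _ = ((a + b : ℕ) : ℕ∞) := by push_cast; rfl

lemma edist_mono {x y : Vert n m} {a b : ℕ} (h : (Gphi n m φ).edist x y ≤ (a : ℕ∞))
    (hab : a ≤ b) : (Gphi n m φ).edist x y ≤ (b : ℕ∞) :=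
  h.trans (by exact_mod_cast Nat.cast_le.mpr hab)

lemma ladder (a d : ℕ) (b b' : Bool) (ha : a < n) (h : a + d < n) :
    (Gphi n m φ).edist (.lit ⟨a, ha⟩ b) (.lit ⟨a + d, h⟩ b') ≤
      ((if d = 0 then (if b = b' then 0 else 1) else d : ℕ) : ℕ∞) := by
  induction d generalizing a b with
  | zero =>
    by_cases hb : b = b'
    · simp [hb, SimpleGraph.edist_self]
    · simp only [if_pos rfl, if_neg hb]
      exact edist_le_one φ (by simp [hb]) (Or.inl ⟨rfl, hb⟩)
  | succ d ih =>
    have step : (Gphi n m φ).edist (.lit ⟨a, ha⟩ b) (.lit ⟨a + 1, by omega⟩ b') ≤ (1 : ℕ) :=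
      edist_le_one φ (by simp) (Or.inr (by simp))
    have h2 : a + 1 + d < n := by omega
    have rest := ih (a + 1) b' (by omega) h2
    have : (⟨a + 1 + d, h2⟩ : Fin n) = ⟨a + (d + 1), h⟩ := by simp only [Fin.mk.injEq]; omega
    rw [this] at rest
    refine edist_mono φ (edist_le_trans φ step rest) ?_
    split_ifs <;> first | omega | simp_all

lemma ladder' (a b : ℕ) (hab : a ≤ b) (hb : b < n) (b₁ b₂ : Bool) :
    (Gphi n m φ).edist (.lit ⟨a, by omega⟩ b₁) (.lit ⟨b, hb⟩ b₂) ≤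
      ((if a = b then (if b₁ = b₂ then 0 else 1) else b - a : ℕ) : ℕ∞) := by
  obtain ⟨d, rfl⟩ := Nat.exists_eq_add_of_le hab
  have := ladder φ a d b₁ b₂ (by omega) hb
  refine edist_mono φ this ?_
  split_ifs <;> first | omega | simp_all

lemma chainw (a d : ℕ) (ha : a < 2 * n) (h : a + d < 2 * n)
    (hside : a + d < n ∨ n ≤ a) :
    (Gphi n m φ).edist (.chain ⟨a, ha⟩) (.chain ⟨a + d, h⟩) ≤ ((d : ℕ) : ℕ∞) := by
  induction d generalizing a with
  | zero => simp [SimpleGraph.edist_self]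
  | succ d ih =>
    have step : (Gphi n m φ).edist (.chain ⟨a, ha⟩) (.chain ⟨a + 1, by omega⟩) ≤ (1 : ℕ) := by
      refine edist_le_one φ (by first | (simp; omega) | simp | omega) ⟨by simp, by first | (simp; omega) | simp | omega⟩
    have h2 : a + 1 + d < 2 * n := by omega
    have rest := ih (a + 1) (by omega) h2 (by omega)
    have : (⟨a + 1 + d, h2⟩ : Fin (2 * n)) = ⟨a + (d + 1), h⟩ := by simp only [Fin.mk.injEq]; omega
    rw [this] at rest
    exact edist_mono φ (edist_le_trans φ step rest) (by omega)

lemma chainw' (a b : ℕ) (hab : a ≤ b) (hb : b < 2 * n) (hside : b < n ∨ n ≤ a) :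
    (Gphi n m φ).edist (.chain ⟨a, by omega⟩) (.chain ⟨b, hb⟩) ≤ ((b - a : ℕ) : ℕ∞) := by
  obtain ⟨d, rfl⟩ := Nat.exists_eq_add_of_le hab
  exact edist_mono φ (chainw φ a d (by omega) hb hside) (by omega)

lemma innerw (j : Fin m) (t : Fin 3) (a d : ℕ) (ha : a < n / 2) (h : a + d < n / 2) :
    (Gphi n m φ).edist (.inner j t ⟨a, ha⟩) (.inner j t ⟨a + d, h⟩) ≤ ((d : ℕ) : ℕ∞) := by
  induction d generalizing a with
  | zero => simp [SimpleGraph.edist_self]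
  | succ d ih =>
    have step : (Gphi n m φ).edist (.inner j t ⟨a, ha⟩) (.inner j t ⟨a + 1, by omega⟩)
        ≤ (1 : ℕ) := by
      refine edist_le_one φ (by first | (simp; omega) | simp | omega) ⟨rfl, rfl, by simp⟩
    have h2 : a + 1 + d < n / 2 := by omega
    have rest := ih (a + 1) (by omega) h2
    have : (⟨a + 1 + d, h2⟩ : Fin (n / 2)) = ⟨a + (d + 1), h⟩ := by simp only [Fin.mk.injEq]; omega
    rw [this] at rest
    exact edist_mono φ (edist_le_trans φ step rest) (by omega)

lemma innerw' (j : Fin m) (t : Fin 3) (a b : ℕ) (hab : a ≤ b) (hb : b < n / 2) :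
    (Gphi n m φ).edist (.inner j t ⟨a, by omega⟩) (.inner j t ⟨b, hb⟩) ≤ ((b - a : ℕ) : ℕ∞) := by
  obtain ⟨d, rfl⟩ := Nat.exists_eq_add_of_le hab
  exact edist_mono φ (innerw φ j t a d (by omega) hb) (by omega)

def cpl (n : ℕ) (q : Fin n × Bool) : ℕ :=
  if 0 < (q.1 : ℕ) then q.1 else if q.2 then 0 else 1

def cql (n : ℕ) (q : Fin n × Bool) : ℕ :=
  if (q.1 : ℕ) < n - 1 then n - 1 - q.1 else if q.2 then 0 else 1

def cp : Vert n m → ℕ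
  | .chain k => if (k : ℕ) < n then n - k else (k : ℕ) - n + 1 + (n - 1)
  | .lit i b => cpl n (i, b)
  | .clause j => n / 2 + 1 + cpl n (φ j 0)
  | .inner j t s => (n / 2 - s) + cpl n (φ j t)

def cq : Vert n m → ℕ
  | .chain k => if (k : ℕ) < n then (n - 1 - k) + 1 + (n - 1) else (k : ℕ) - n + 1
  | .lit i b => cql n (i, b)
  | .clause j => n / 2 + 1 + cql n (φ j 0)
  | .inner j t s => (n / 2 - s) + cql n (φ j t)

lemma litP (h4 : 4 ≤ n) (i : Fin n) (b : Bool) :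
    (Gphi n m φ).edist (.lit i b) (.lit ⟨0, by omega⟩ true) ≤ ((cpl n (i, b) : ℕ) : ℕ∞) := by
  have := ladder' φ 0 i (Nat.zero_le _) i.isLt true b
  rw [SimpleGraph.edist_comm] at this
  simp only [Fin.eta] at this
  refine edist_mono φ this ?_
  simp only [cpl]; cases b <;> split_ifs <;> simp_all <;> omega

lemma litQ (h4 : 4 ≤ n) (i : Fin n) (b : Bool) :
    (Gphi n m φ).edist (.lit i b) (.lit ⟨n - 1, by omega⟩ true) ≤ ((cql n (i, b) : ℕ) : ℕ∞) := by
  have := ladder' φ i (n - 1) (by have := i.isLt; omega) (by omega) b true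
  simp only [Fin.eta] at this
  refine edist_mono φ this ?_
  have := i.isLt
  simp only [cql]; cases b <;> split_ifs <;> simp_all <;> omega

lemma gadget_lit (h4 : 4 ≤ n) (j : Fin m) (t : Fin 3) (s : Fin (n / 2)) :
    (Gphi n m φ).edist (.inner j t s) (.lit (φ j t).1 (φ j t).2) ≤ ((n / 2 - s : ℕ) : ℕ∞) := by
  have h2 : 2 ≤ n / 2 := by omega
  have t1 := innerw' φ j t s (n / 2 - 1) (by have := s.isLt; omega) (by omega)
  simp only [Fin.eta] at t1
  have t2 : (Gphi n m φ).edist (.inner j t ⟨n / 2 - 1, by omega⟩) (.lit (φ j t).1 (φ j t).2)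
      ≤ ((1 : ℕ) : ℕ∞) :=
    edist_le_one φ (by simp) ⟨by simp, rfl⟩
  refine edist_mono φ (edist_le_trans φ t1 t2) (by have := s.isLt; omega)

lemma clause_lit (h4 : 4 ≤ n) (j : Fin m) (t : Fin 3) :
    (Gphi n m φ).edist (.clause j) (.lit (φ j t).1 (φ j t).2) ≤ ((n / 2 + 1 : ℕ) : ℕ∞) := by
  have h2 : 2 ≤ n / 2 := by omega
  have t1 : (Gphi n m φ).edist (.clause j) (.inner j t ⟨0, by omega⟩) ≤ ((1 : ℕ) : ℕ∞) :=
    edist_le_one φ (by simp) ⟨rfl, rfl⟩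
  have t2 := gadget_lit φ h4 j t ⟨0, by omega⟩
  refine edist_mono φ (edist_le_trans φ t1 t2) (by omega)

lemma edist_P (h4 : 4 ≤ n) (x : Vert n m) :
    (Gphi n m φ).edist x (.lit ⟨0, by omega⟩ true) ≤ ((cp φ x : ℕ) : ℕ∞) := by
  cases x with
  | lit i b => exact litP φ h4 i b
  | chain k =>
    by_cases hk : (k : ℕ) < n
    · have t1 := chainw' φ k (n - 1) (by omega) (by omega) (Or.inl (by omega))
      simp only [Fin.eta] at t1
      have t2 : (Gphi n m φ).edist (.chain ⟨n - 1, by omega⟩) (.lit ⟨0, by omega⟩ true)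
          ≤ ((1 : ℕ) : ℕ∞) :=
        edist_le_one φ (by simp) (Or.inl ⟨by simp, by simp⟩)
      refine edist_mono φ (edist_le_trans φ t1 t2) ?_
      simp only [cp, if_pos hk]; omega
    · have t1 := chainw' φ n k (by omega) k.isLt (Or.inr le_rfl)
      simp only [Fin.eta] at t1
      rw [SimpleGraph.edist_comm] at t1
      have t2 : (Gphi n m φ).edist (.chain ⟨n, by omega⟩) (.lit ⟨n - 1, by omega⟩ true)
          ≤ ((1 : ℕ) : ℕ∞) :=
        edist_le_one φ (by simp) (Or.inr ⟨by simp, by simp⟩)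
      have t3 := litP φ h4 ⟨n - 1, by omega⟩ true
      have t3' := edist_mono φ t3 (show cpl n (⟨n - 1, by omega⟩, true) ≤ n - 1 by
        simp only [cpl]; split_ifs <;> omega)
      refine edist_mono φ (edist_le_trans φ (edist_le_trans φ t1 t2) t3') ?_
      simp only [cp, if_neg hk]; omega
  | clause j =>
    have t1 := clause_lit φ h4 j 0
    have t2 := litP φ h4 (φ j 0).1 (φ j 0).2
    refine edist_mono φ (edist_le_trans φ t1 t2) (by simp [cp])
  | inner j t s =>
    have t1 := gadget_lit φ h4 j t s
    have t2 := litP φ h4 (φ j t).1 (φ j t).2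
    refine edist_mono φ (edist_le_trans φ t1 t2) (by simp [cp])

lemma edist_Q (h4 : 4 ≤ n) (x : Vert n m) :
    (Gphi n m φ).edist x (.lit ⟨n - 1, by omega⟩ true) ≤ ((cq φ x : ℕ) : ℕ∞) := by
  cases x with
  | lit i b => exact litQ φ h4 i b
  | chain k =>
    by_cases hk : (k : ℕ) < n
    · have t1 := chainw' φ k (n - 1) (by omega) (by omega) (Or.inl (by omega))
      simp only [Fin.eta] at t1
      have t2 : (Gphi n m φ).edist (.chain ⟨n - 1, by omega⟩) (.lit ⟨0, by omega⟩ true)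
          ≤ ((1 : ℕ) : ℕ∞) :=
        edist_le_one φ (by simp) (Or.inl ⟨by simp, by simp⟩)
      have t3 := litQ φ h4 ⟨0, by omega⟩ true
      have t3' := edist_mono φ t3 (show cql n (⟨0, by omega⟩, true) ≤ n - 1 by
        simp only [cql]; split_ifs <;> simp_all <;> omega)
      refine edist_mono φ (edist_le_trans φ (edist_le_trans φ t1 t2) t3') ?_
      simp only [cq, if_pos hk]; omega
    · have t1 := chainw' φ n k (by omega) k.isLt (Or.inr le_rfl)
      simp only [Fin.eta] at t1
      rw [SimpleGraph.edist_comm] at t1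
      have t2 : (Gphi n m φ).edist (.chain ⟨n, by omega⟩) (.lit ⟨n - 1, by omega⟩ true)
          ≤ ((1 : ℕ) : ℕ∞) :=
        edist_le_one φ (by simp) (Or.inr ⟨by simp, by simp⟩)
      refine edist_mono φ (edist_le_trans φ t1 t2) ?_
      simp only [cq, if_neg hk]; omega
  | clause j =>
    have t1 := clause_lit φ h4 j 0
    have t2 := litQ φ h4 (φ j 0).1 (φ j 0).2
    refine edist_mono φ (edist_le_trans φ t1 t2) (by simp [cq])
  | inner j t s =>
    have t1 := gadget_lit φ h4 j t s
    have t2 := litQ φ h4 (φ j t).1 (φ j t).2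
    refine edist_mono φ (edist_le_trans φ t1 t2) (by simp [cq])

lemma cpl_add_cql (h4 : 4 ≤ n) (q : Fin n × Bool) : cpl n q + cql n q ≤ n := by
  have := q.1.isLt
  simp only [cpl, cql]; split_ifs <;> omega

lemma S_le (h4 : 4 ≤ n) (x : Vert n m) : cp φ x + cq φ x ≤ 3 * n - 1 := by
  cases x with
  | lit i b =>
    have := cpl_add_cql (n := n) h4 (i, b)
    simp only [cp, cq]; omega
  | chain k =>
    have := k.isLt
    simp only [cp, cq]; split_ifs <;> omega
  | clause j =>
    have := cpl_add_cql (n := n) h4 (φ j 0)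
    simp only [cp, cq]; omega
  | inner j t s =>
    have := cpl_add_cql (n := n) h4 (φ j t)
    have := s.isLt
    simp only [cp, cq]; omega

lemma S_eq (h4 : 4 ≤ n) (x : Vert n m) (h : 3 * n - 1 ≤ cp φ x + cq φ x) :
    x = .chain ⟨0, by omega⟩ ∨ x = .chain ⟨2 * n - 1, by omega⟩ := by
  cases x with
  | lit i b =>
    have := cpl_add_cql (n := n) h4 (i, b)
    simp only [cp, cq] at h; omega
  | chain k =>
    have := k.isLt
    simp only [cp, cq] at h
    split_ifs at h with hk
    · exact Or.inl (by congr 1; exact Fin.ext (by simp only [Fin.val_mk]; omega))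
    · exact Or.inr (by congr 1; exact Fin.ext (by simp only [Fin.val_mk]; omega))
  | clause j =>
    have := cpl_add_cql (n := n) h4 (φ j 0)
    simp only [cp, cq] at h; omega
  | inner j t s =>
    have := cpl_add_cql (n := n) h4 (φ j t)
    have := s.isLt
    simp only [cp, cq] at h; omega

lemma edist_all (h4 : 4 ≤ n) (u v : Vert n m) :
    (Gphi n m φ).edist u v ≤ ((3 * n - 1 : ℕ) : ℕ∞) := by
  have hu := S_le φ h4 u
  have hv := S_le φ h4 v
  rcases le_total (cp φ u + cp φ v) (cq φ u + cq φ v) with hle | hle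
  · have t2 := edist_P φ h4 v
    rw [SimpleGraph.edist_comm] at t2
    exact edist_mono φ (edist_le_trans φ (edist_P φ h4 u) t2) (by omega)
  · have t2 := edist_Q φ h4 v
    rw [SimpleGraph.edist_comm] at t2
    exact edist_mono φ (edist_le_trans φ (edist_Q φ h4 u) t2) (by omega)

lemma dist_le_S (h4 : 4 ≤ n) (u v : Vert n m) :
    (Gphi n m φ).dist u v ≤ cp φ u + cp φ v ∧
    (Gphi n m φ).dist u v ≤ cq φ u + cq φ v := by
  constructor
  · have t2 := edist_P φ h4 v
    rw [SimpleGraph.edist_comm] at t2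
    have := edist_le_trans φ (edist_P φ h4 u) t2
    exact ENat.toNat_le_of_le_coe this
  · have t2 := edist_Q φ h4 v
    rw [SimpleGraph.edist_comm] at t2
    have := edist_le_trans φ (edist_Q φ h4 u) t2
    exact ENat.toNat_le_of_le_coe this

lemma pin (h4 : 4 ≤ n) (u v : Vert n m) (h : 3 * n - 1 ≤ (Gphi n m φ).dist u v) :
    (u = .chain ⟨0, by omega⟩ ∧ v = .chain ⟨2 * n - 1, by omega⟩) ∨
    (u = .chain ⟨2 * n - 1, by omega⟩ ∧ v = .chain ⟨0, by omega⟩) := by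
  obtain ⟨h1, h2⟩ := dist_le_S φ h4 u v
  have hSu := S_le φ h4 u
  have hSv := S_le φ h4 v
  have hu : 3 * n - 1 ≤ cp φ u + cq φ u := by omega
  have hv : 3 * n - 1 ≤ cp φ v + cq φ v := by omega
  have hne : u ≠ v := by
    rintro rfl
    rw [SimpleGraph.dist_self] at h; omega
  rcases S_eq φ h4 u hu with h'u | h'u <;> rcases S_eq φ h4 v hv with h'v | h'v
  · exact absurd (h'u.trans h'v.symm) hne
  · exact Or.inl ⟨h'u, h'v⟩
  · exact Or.inr ⟨h'u, h'v⟩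
  · exact absurd (h'u.trans h'v.symm) hne

lemma main (h4 : 4 ≤ n)
    (p : (Gphi n m φ).Walk (.chain ⟨0, by omega⟩) (.chain ⟨2 * n - 1, by omega⟩))
    (hp : p.length = 3 * n - 1) :
    (∀ k : Fin (2 * n), Vert.chain k ∈ p.support) ∧
    (∀ i : Fin n, Xor' (Vert.lit i true ∈ p.support) (Vert.lit i false ∈ p.support)) ∧
    (∀ j : Fin m, Vert.clause j ∉ p.support) ∧
    (∀ (j : Fin m) (t : Fin 3) (s : Fin (n / 2)), Vert.inner j t s ∉ p.support) := by
  have hF : ∀ ℓ, ℓ ≤ p.length → fpot φ (p.getVert ℓ) ≤ ℓ := by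
    intro ℓ
    induction ℓ with
    | zero =>
      intro _
      rw [SimpleGraph.Walk.getVert_zero]
      simp only [fpot, Fin.val_mk]
      split_ifs <;> omega
    | succ ℓ ih =>
      intro hℓ
      have hadj := p.adj_getVert_succ (show ℓ < p.length by omega)
      have h1 := lip_f' φ hadj
      have h2 := ih (by omega)
      omega
  have hG : ∀ d ℓ, ℓ + d = p.length → gpot φ (p.getVert ℓ) ≤ d := by
    intro d
    induction d with
    | zero =>
      intro ℓ h0
      have : ℓ = p.length := by omega
      subst this
      rw [SimpleGraph.Walk.getVert_length]
      simp only [gpot, Fin.val_mk]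
      split_ifs <;> omega
    | succ d ih =>
      intro ℓ h0
      have hadj := (p.adj_getVert_succ (show ℓ < p.length by omega)).symm
      have h1 := lip_g' φ hadj
      have h2 := ih (ℓ + 1) (by omega)
      omega
  have huniq : ∀ (x : Vert n m) ℓ, ℓ ≤ p.length → p.getVert ℓ = x →
      fpot φ x ≤ ℓ ∧ gpot φ x ≤ 3 * n - 1 - ℓ := by
    intro x ℓ hl hx
    subst hx
    refine ⟨hF ℓ hl, ?_⟩
    have := hG (p.length - ℓ) ℓ (by omega)
    omega
  have hclause : ∀ j : Fin m, Vert.clause j ∉ p.support := by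
    intro j hj
    rw [SimpleGraph.Walk.mem_support_iff_exists_getVert] at hj
    obtain ⟨ℓ, hx, hℓ⟩ := hj
    obtain ⟨hf, hg⟩ := huniq _ ℓ hℓ hx
    have := fg_clause φ j
    omega
  have hinner : ∀ (j : Fin m) (t : Fin 3) (s : Fin (n / 2)), Vert.inner j t s ∉ p.support := by
    intro j t s hj
    rw [SimpleGraph.Walk.mem_support_iff_exists_getVert] at hj
    obtain ⟨ℓ, hx, hℓ⟩ := hj
    obtain ⟨hf, hg⟩ := huniq _ ℓ hℓ hx
    have := fg_inner φ j t s
    omega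
  refine ⟨?_, ?_, hclause, hinner⟩
  · -- all chain vertices on the support
    intro k
    have hk2 := k.isLt
    set ℓ : ℕ := if (k : ℕ) < n then (k : ℕ) else (k : ℕ) + n with hℓdef
    have hl : ℓ ≤ p.length := by rw [hp]; simp only [hℓdef]; split_ifs <;> omega
    suffices h : p.getVert ℓ = Vert.chain k by
      exact SimpleGraph.Walk.mem_support_iff_exists_getVert.mpr ⟨ℓ, h, hl⟩
    cases hxx : p.getVert ℓ with
    | lit i b =>
      obtain ⟨hf, hg⟩ := huniq _ ℓ hl hxx
      have := i.isLt
      simp only [fpot, gpot] at hf hg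
      simp only [hℓdef] at hf hg ⊢
      split_ifs at hf hg ⊢ <;> omega
    | chain k' =>
      obtain ⟨hf, hg⟩ := huniq _ ℓ hl hxx
      have hk'2 := k'.isLt
      simp only [fpot, gpot] at hf hg
      congr 1
      refine Fin.ext ?_
      simp only [hℓdef] at hf hg
      split_ifs at hf hg <;> omega
    | clause j => exact absurd (SimpleGraph.Walk.mem_support_iff_exists_getVert.mpr
        ⟨ℓ, hxx, hl⟩) (hclause j)
    | inner j t s => exact absurd (SimpleGraph.Walk.mem_support_iff_exists_getVert.mpr
        ⟨ℓ, hxx, hl⟩) (hinner j t s)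
  · -- exactly one literal per column
    intro i
    have hi2 := i.isLt
    have hl : n + (i : ℕ) ≤ p.length := by omega
    have hex : p.getVert (n + (i : ℕ)) = Vert.lit i true ∨
        p.getVert (n + (i : ℕ)) = Vert.lit i false := by
      cases hxx : p.getVert (n + (i : ℕ)) with
      | lit i' b =>
        obtain ⟨hf, hg⟩ := huniq _ _ hl hxx
        have hi'2 := i'.isLt
        simp only [fpot, gpot] at hf hg
        have : i' = i := Fin.ext (by omega)
        subst this
        cases b
        · exact Or.inr rfl
        · exact Or.inl rfl
      | chain k' =>
        obtain ⟨hf, hg⟩ := huniq _ _ hl hxx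
        have hk'2 := k'.isLt
        simp only [fpot, gpot] at hf hg
        split_ifs at hf hg <;> omega
      | clause j => exact absurd (SimpleGraph.Walk.mem_support_iff_exists_getVert.mpr
          ⟨_, hxx, hl⟩) (hclause j)
      | inner j t s => exact absurd (SimpleGraph.Walk.mem_support_iff_exists_getVert.mpr
          ⟨_, hxx, hl⟩) (hinner j t s)
    have huniq2 : ∀ b, Vert.lit i b ∈ p.support → p.getVert (n + (i : ℕ)) = Vert.lit i b := by
      intro b hb
      rw [SimpleGraph.Walk.mem_support_iff_exists_getVert] at hb
      obtain ⟨ℓ', hx', hl'⟩ := hb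
      obtain ⟨hf, hg⟩ := huniq _ ℓ' hl' hx'
      simp only [fpot, gpot] at hf hg
      have : ℓ' = n + (i : ℕ) := by omega
      subst this
      exact hx'
    rcases hex with h1 | h1
    · refine Or.inl ⟨SimpleGraph.Walk.mem_support_iff_exists_getVert.mpr ⟨_, h1, hl⟩, ?_⟩
      intro hfalse
      have := (huniq2 false hfalse).symm.trans h1
      simp at this
    · refine Or.inr ⟨SimpleGraph.Walk.mem_support_iff_exists_getVert.mpr ⟨_, h1, hl⟩, ?_⟩
      intro htrue
      have := (huniq2 true htrue).symm.trans h1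
      simp at this

end GphiProof

/-- For every 3SAT formula `φ` on `n` boolean variables (`n` even, `n ≥ 4`), every diametral
path of `G(φ)` contains all the vertices `V₁, …, V_{2n}`, contains exactly one of the two
literal vertices `X_i`, `X̄_i` for each `i`, and contains no clause vertex and no internal
vertex of a clause-connecting path. -/
theorem Gphi_diametral_path_structure (n m : ℕ) (hn : Even n) (h4 : 4 ≤ n)
    (φ : Fin m → Fin 3 → Fin n × Bool)
    (u v : Vert n m) (p : (Gphi n m φ).Walk u v)
    (hshort : p.length = (Gphi n m φ).dist u v)
    (hdiam : (Gphi n m φ).dist u v = (Gphi n m φ).diam) :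
    (∀ k : Fin (2 * n), Vert.chain k ∈ p.support) ∧
    (∀ i : Fin n, Xor' (Vert.lit i true ∈ p.support) (Vert.lit i false ∈ p.support)) ∧
    (∀ j : Fin m, Vert.clause j ∉ p.support) ∧
    (∀ (j : Fin m) (t : Fin 3) (s : Fin (n / 2)), Vert.inner j t s ∉ p.support) := by
  classical
  open GphiProof in
  have hediam : (Gphi n m φ).ediam ≤ ((3 * n - 1 : ℕ) : ℕ∞) :=
    SimpleGraph.ediam_le_of_edist_le (fun a b => edist_all φ h4 a b)
  have hne_top : (Gphi n m φ).ediam ≠ ⊤ :=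
    (lt_of_le_of_lt hediam (ENat.coe_lt_top _)).ne
  have hdiam_le : (Gphi n m φ).diam ≤ 3 * n - 1 := ENat.toNat_le_of_le_coe hediam
  -- lower bound for the distance between the two chain endpoints
  have hreach : (Gphi n m φ).Reachable
      (Vert.chain ⟨0, by omega⟩) (Vert.chain ⟨2 * n - 1, by omega⟩) := by
    apply SimpleGraph.reachable_of_edist_ne_top
    exact (lt_of_le_of_lt (edist_all φ h4 _ _) (ENat.coe_lt_top _)).ne
  obtain ⟨w, hw⟩ := hreach.exists_walk_length_eq_dist
  have hlow : 3 * n - 1 ≤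
      (Gphi n m φ).dist (Vert.chain ⟨0, by omega⟩) (Vert.chain ⟨2 * n - 1, by omega⟩) := by
    have := fpot_le_of_walk φ w
    rw [hw] at this
    simp only [fpot, Fin.val_mk] at this
    split_ifs at this <;> omega
  have hdge : 3 * n - 1 ≤ (Gphi n m φ).diam :=
    le_trans hlow (SimpleGraph.dist_le_diam hne_top)
  have hdval : (Gphi n m φ).dist u v = 3 * n - 1 := by omega
  have hplen : p.length = 3 * n - 1 := by omega
  rcases pin φ h4 u v (by omega) with ⟨hu, hv⟩ | ⟨hu, hv⟩
  · obtain ⟨C1, C2, C3, C4⟩ := main φ h4 (p.copy hu hv)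
      (by rw [SimpleGraph.Walk.length_copy]; exact hplen)
    have hsup : ∀ x : Vert n m, x ∈ (p.copy hu hv).support ↔ x ∈ p.support := by
      intro x; rw [SimpleGraph.Walk.support_copy]
    refine ⟨fun k => (hsup _).mp (C1 k), fun i => ?_, fun j hj => C3 j ((hsup _).mpr hj),
      fun j t s hj => C4 j t s ((hsup _).mpr hj)⟩
    have := C2 i
    rcases this with ⟨h1, h2⟩ | ⟨h1, h2⟩
    · exact Or.inl ⟨(hsup _).mp h1, fun hh => h2 ((hsup _).mpr hh)⟩
    · exact Or.inr ⟨(hsup _).mp h1, fun hh => h2 ((hsup _).mpr hh)⟩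
  · obtain ⟨C1, C2, C3, C4⟩ := main φ h4 (p.reverse.copy hv hu)
      (by rw [SimpleGraph.Walk.length_copy, SimpleGraph.Walk.length_reverse]; exact hplen)
    have hsup : ∀ x : Vert n m, x ∈ (p.reverse.copy hv hu).support ↔ x ∈ p.support := by
      intro x
      rw [SimpleGraph.Walk.support_copy, SimpleGraph.Walk.support_reverse]
      exact List.mem_reverse
    refine ⟨fun k => (hsup _).mp (C1 k), fun i => ?_, fun j hj => C3 j ((hsup _).mpr hj),
      fun j t s hj => C4 j t s ((hsup _).mpr hj)⟩
    have := C2 i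
    rcases this with ⟨h1, h2⟩ | ⟨h1, h2⟩
    · exact Or.inl ⟨(hsup _).mp h1, fun hh => h2 ((hsup _).mpr hh)⟩
    · exact Or.inr ⟨(hsup _).mp h1, fun hh => h2 ((hsup _).mpr hh)⟩
end

section
/- For every 3SAT formula φ on n boolean variables (n even, n ≥ 4), the graph G(φ) is (n/2 + 1)-laminar if and only if φ is satisfiable. That is, G(φ) has a diametral path μ such that every vertex of G(φ) is at distance at most n/2 + 1 from μ if and only if there is a truth assignment of x₁,…,x_n making every clause of φ true. -/
open SimpleGraph

namespace GphiAux
variable {n m : ℕ} {φ : Fin m → Fin 3 → Fin n × Bool}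

/-! ### adjacency helper lemmas -/

lemma adj_of_rel {u v : Vert n m} (hne : u ≠ v) (h : satRel n m φ u v) : (Gphi n m φ).Adj u v :=
  (SimpleGraph.fromRel_adj _ _ _).2 ⟨hne, Or.inl h⟩

lemma adj_cc {a b : Fin (2*n)} (h : (a:ℕ)+1 = b) (h2 : (b:ℕ) ≠ n) :
    (Gphi n m φ).Adj (.chain a) (.chain b) := by
  refine adj_of_rel (fun hc => ?_) ⟨h, h2⟩
  injection hc with hc; rw [hc] at h; omega

lemma adj_ll {a b : Fin n} {x y : Bool} (h : (a = b ∧ x ≠ y) ∨ (a:ℕ)+1 = b) :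
    (Gphi n m φ).Adj (.lit a x) (.lit b y) := by
  refine adj_of_rel (fun hc => ?_) h
  injection hc with h1 h2
  rcases h with ⟨h3, h4⟩ | h3
  · exact h4 h2
  · rw [h1] at h3; omega

lemma adj_cl {a : Fin (2*n)} {i : Fin n} {b : Bool}
    (h : ((a:ℕ) = n - 1 ∧ (i:ℕ) = 0) ∨ ((a:ℕ) = n ∧ (i:ℕ) = n - 1)) :
    (Gphi n m φ).Adj (.chain a) (.lit i b) := by
  refine adj_of_rel (fun hc => ?_) h; cases hc

lemma adj_cli {j : Fin m} {t : Fin 3} {s : Fin (n/2)} (h : (s:ℕ) = 0) :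
    (Gphi n m φ).Adj (.clause j) (.inner j t s) := by
  refine adj_of_rel (fun hc => ?_) ⟨rfl, h⟩; cases hc

lemma adj_ii {j : Fin m} {t : Fin 3} {s s' : Fin (n/2)} (h : (s:ℕ)+1 = s') :
    (Gphi n m φ).Adj (.inner j t s) (.inner j t s') := by
  refine adj_of_rel (fun hc => ?_) ⟨rfl, rfl, h⟩
  injection hc with _ _ hc; rw [hc] at h; omega

lemma adj_il {j : Fin m} {t : Fin 3} {s : Fin (n/2)} {i : Fin n} {b : Bool}
    (h : (s:ℕ) = n/2 - 1) (h2 : φ j t = (i, b)) :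
    (Gphi n m φ).Adj (.inner j t s) (.lit i b) := by
  refine adj_of_rel (fun hc => ?_) ⟨h, h2⟩; cases hc

end GphiAux


section Seq
variable {V : Type*} {G : SimpleGraph V}

lemma walk_of_seq (F : ℕ → V) (L : ℕ) (hF : ∀ i, i < L → G.Adj (F i) (F (i+1))) :
    ∃ p : G.Walk (F 0) (F L), p.length = L ∧ ∀ k, k ≤ L → F k ∈ p.support := by
  induction L with
  | zero =>
      refine ⟨.nil, rfl, ?_⟩
      intro k hk
      interval_cases k
      simp
  | succ L ih =>
      obtain ⟨p, hl, hs⟩ := ih (fun i hi => hF i (by omega))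
      refine ⟨p.concat (hF L (by omega)), ?_, ?_⟩
      · simp [SimpleGraph.Walk.length_concat, hl]
      · intro k hk
        rw [SimpleGraph.Walk.support_concat, List.mem_append]
        rcases Nat.lt_or_ge k (L+1) with h | h
        · exact Or.inl (hs k (by omega))
        · have : k = L + 1 := by omega
          subst this; simp

lemma walk_between (F : ℕ → V) (L : ℕ) (hF : ∀ i, i < L → G.Adj (F i) (F (i+1)))
    {x y : V} (hx : F 0 = x) (hy : F L = y) :
    ∃ p : G.Walk x y, p.length = L ∧ ∀ k, k ≤ L → F k ∈ p.support := by
  obtain ⟨p, h1, h2⟩ := walk_of_seq F L hF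
  exact ⟨p.copy hx hy, by simpa using h1, by simpa using h2⟩

lemma dist_le_of_seq (F : ℕ → V) (L : ℕ) (hF : ∀ i, i < L → G.Adj (F i) (F (i+1)))
    {x y : V} (hx : F 0 = x) (hy : F L = y) : G.dist x y ≤ L := by
  obtain ⟨p, h1, -⟩ := walk_between F L hF hx hy
  exact h1 ▸ SimpleGraph.dist_le p

lemma reachable_of_seq (F : ℕ → V) (L : ℕ) (hF : ∀ i, i < L → G.Adj (F i) (F (i+1)))
    {x y : V} (hx : F 0 = x) (hy : F L = y) : G.Reachable x y := by
  obtain ⟨p, -, -⟩ := walk_between F L hF hx hy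
  exact ⟨p⟩

lemma pot_le_of_walk (P : V → ℕ)
    (hP : ∀ u v, G.Adj u v → P u ≤ P v + 1 ∧ P v ≤ P u + 1)
    {u v : V} (p : G.Walk u v) : P v ≤ P u + p.length := by
  induction p with
  | nil => simp
  | cons h q ih =>
      have := (hP _ _ h).2
      simp only [SimpleGraph.Walk.length_cons]
      omega

lemma getVert_dist_bounds (hconn : G.Connected) {u v : V} (p : G.Walk u v) (k : ℕ)
    (hk : k ≤ p.length) :
    G.dist u (p.getVert k) ≤ k ∧ G.dist (p.getVert k) v ≤ p.length - k := by
  induction p generalizing k with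
  | nil =>
      simp only [SimpleGraph.Walk.length_nil] at hk
      interval_cases k
      simp [SimpleGraph.Walk.getVert_zero]
  | @cons a b c h q ih =>
      match k with
      | 0 =>
          refine ⟨by simp [SimpleGraph.Walk.getVert_zero], ?_⟩
          simpa using SimpleGraph.dist_le (SimpleGraph.Walk.cons h q)
      | (k+1) =>
          simp only [SimpleGraph.Walk.getVert_cons_succ, SimpleGraph.Walk.length_cons]
          simp only [SimpleGraph.Walk.length_cons] at hk
          obtain ⟨h1, h2⟩ := ih (k := k) (by omega)
          constructor
          · calc G.dist a (q.getVert k) ≤ G.dist a b + G.dist b (q.getVert k) :=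
                  hconn.dist_triangle
              _ ≤ 1 + k := by
                  have : G.dist a b ≤ 1 := by
                    have : G.dist a b ≤ (SimpleGraph.Walk.cons h .nil).length :=
                      SimpleGraph.dist_le _
                    simpa using this
                  omega
              _ = k + 1 := by omega
          · omega

end Seq

namespace GphiAux
variable {n m : ℕ} {φ : Fin m → Fin 3 → Fin n × Bool}

def iT (φ : Fin m → Fin 3 → Fin n × Bool) (j : Fin m) (t : Fin 3) : ℕ := ((φ j t).1 : ℕ)

def minI (φ : Fin m → Fin 3 → Fin n × Bool) (j : Fin m) : ℕ :=
  min (min (iT φ j 0) (iT φ j 1)) (iT φ j 2)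

def maxI (φ : Fin m → Fin 3 → Fin n × Bool) (j : Fin m) : ℕ :=
  max (max (iT φ j 0) (iT φ j 1)) (iT φ j 2)

lemma iT_lt (j : Fin m) (t : Fin 3) : iT φ j t < n := ((φ j t).1).isLt

lemma iT_bounds (j : Fin m) (t : Fin 3) :
    minI φ j ≤ iT φ j t ∧ iT φ j t ≤ maxI φ j := by
  fin_cases t <;> simp [minI, maxI] <;> omega

lemma minI_le_maxI (j : Fin m) : minI φ j ≤ maxI φ j :=
  le_trans (iT_bounds j 0).1 (iT_bounds j 0).2

lemma maxI_lt (j : Fin m) (hm : 0 < n) : maxI φ j < n := by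
  have h0 := iT_lt (φ := φ) j 0
  have h1 := iT_lt (φ := φ) j 1
  have h2 := iT_lt (φ := φ) j 2
  simp only [maxI]
  omega

/-- lower bound for distance between literal vertices -/
def ld (x y : Fin n × Bool) : ℕ :=
  if x.1 = y.1 then (if x.2 = y.2 then 0 else 1)
  else max (x.1 : ℕ) (y.1 : ℕ) - min (x.1 : ℕ) (y.1 : ℕ)

lemma ld_self (x : Fin n × Bool) : ld x x = 0 := by simp [ld]

lemma ld_eq_zero {x y : Fin n × Bool} (h : ld x y = 0) : x = y := by
  unfold ld at h
  split_ifs at h with h1 h2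
  · exact Prod.ext h1 h2
  · have : (x.1 : ℕ) = (y.1 : ℕ) := by omega
    exact absurd (Fin.ext this) h1

lemma ld_le {x y : Fin n × Bool} (h2 : 2 ≤ n) : ld x y ≤ n - 1 := by
  have h1 := x.1.isLt
  have h1' := y.1.isLt
  unfold ld; split_ifs <;> omega

lemma ld_same_fst {x y : Fin n × Bool} (h : (x.1 : ℕ) = (y.1 : ℕ)) : ld x y ≤ 1 := by
  unfold ld
  rw [if_pos (Fin.ext h)]
  split_ifs <;> omega

lemma ld_fst_bound {x y : Fin n × Bool} :
    (max (x.1 : ℕ) (y.1 : ℕ) - min (x.1 : ℕ) (y.1 : ℕ)) ≤ ld x y ∧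
      ld x y ≤ (max (x.1 : ℕ) (y.1 : ℕ) - min (x.1 : ℕ) (y.1 : ℕ)) + 1 := by
  unfold ld
  split_ifs with h1 h2
  · rw [h1]; omega
  · rw [h1]; omega
  · omega

lemma ld_lip {z x y : Fin n × Bool}
    (h : ((x.1 : ℕ) = (y.1 : ℕ) ∧ x.2 ≠ y.2) ∨ (x.1 : ℕ) + 1 = (y.1 : ℕ)) :
    ld z x ≤ ld z y + 1 ∧ ld z y ≤ ld z x + 1 := by
  rcases z with ⟨z1, z2⟩; rcases x with ⟨x1, x2⟩; rcases y with ⟨y1, y2⟩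
  simp only [ld, Fin.ext_iff] at *
  split_ifs at * <;> omega

def litd (φ : Fin m → Fin 3 → Fin n × Bool) (j : Fin m) (y : Fin n × Bool) : ℕ :=
  min (min (ld (φ j 0) y) (ld (φ j 1) y)) (ld (φ j 2) y)

lemma litd_le (j : Fin m) (t : Fin 3) (y : Fin n × Bool) : litd φ j y ≤ ld (φ j t) y := by
  fin_cases t <;> simp [litd] <;> omega

lemma litd_eq_zero {j : Fin m} {y : Fin n × Bool} (h : litd φ j y = 0) :
    ∃ t, φ j t = y := by
  simp only [litd] at h
  have : ld (φ j 0) y = 0 ∨ ld (φ j 1) y = 0 ∨ ld (φ j 2) y = 0 := by omega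
  rcases this with h | h | h
  exacts [⟨0, ld_eq_zero h⟩, ⟨1, ld_eq_zero h⟩, ⟨2, ld_eq_zero h⟩]

lemma litd_lip {j : Fin m} {x y : Fin n × Bool}
    (h : ((x.1 : ℕ) = (y.1 : ℕ) ∧ x.2 ≠ y.2) ∨ (x.1 : ℕ) + 1 = (y.1 : ℕ)) :
    litd φ j x ≤ litd φ j y + 1 ∧ litd φ j y ≤ litd φ j x + 1 := by
  have h0 := ld_lip (z := φ j 0) h
  have h1 := ld_lip (z := φ j 1) h
  have h2 := ld_lip (z := φ j 2) h
  simp only [litd]; omega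

def litcd (φ : Fin m → Fin 3 → Fin n × Bool) (j0 j : Fin m) : ℕ :=
  min (min (litd φ j0 (φ j 0)) (litd φ j0 (φ j 1))) (litd φ j0 (φ j 2))

lemma litcd_le (j0 j : Fin m) (t : Fin 3) : litcd φ j0 j ≤ litd φ j0 (φ j t) := by
  fin_cases t <;> simp [litcd] <;> omega

/-- bounds on `litd` at extreme levels. -/
lemma litd_level0 {j : Fin m} {y : Fin n × Bool} (h : (y.1 : ℕ) = 0) :
    minI φ j ≤ litd φ j y ∧ litd φ j y ≤ minI φ j + 1 := by
  have h0 := ld_fst_bound (x := φ j 0) (y := y)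
  have h1 := ld_fst_bound (x := φ j 1) (y := y)
  have h2 := ld_fst_bound (x := φ j 2) (y := y)
  simp only [litd, minI, iT] at *
  omega

lemma litd_leveltop {j : Fin m} {y : Fin n × Bool} (h : (y.1 : ℕ) = n - 1) (hn : 0 < n) :
    (n - 1) - maxI φ j ≤ litd φ j y ∧ litd φ j y ≤ n - maxI φ j := by
  have h0 := ld_fst_bound (x := φ j 0) (y := y)
  have h1 := ld_fst_bound (x := φ j 1) (y := y)
  have h2 := ld_fst_bound (x := φ j 2) (y := y)
  have i0 := iT_lt (φ := φ) j 0
  have i1 := iT_lt (φ := φ) j 1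
  have i2 := iT_lt (φ := φ) j 2
  simp only [litd, maxI, iT] at *
  omega

end GphiAux

namespace GphiAux
variable {n m : ℕ} {φ : Fin m → Fin 3 → Fin n × Bool}

/-- lower bound on distance from `chain 0`. -/
def fPot (φ : Fin m → Fin 3 → Fin n × Bool) : Vert n m → ℕ
  | .chain k => if (k:ℕ) < n then (k:ℕ) else n + (k:ℕ)
  | .lit i _ => n + (i:ℕ)
  | .clause j => n + n/2 + 1 + minI φ j
  | .inner j t s => min (n + iT φ j t + (n/2 - (s:ℕ))) (n + n/2 + 2 + minI φ j + (s:ℕ))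

/-- lower bound on distance to `chain (2n-1)`. -/
def gPot (φ : Fin m → Fin 3 → Fin n × Bool) : Vert n m → ℕ
  | .chain k => if (k:ℕ) < n then 3*n - 1 - (k:ℕ) else 2*n - 1 - (k:ℕ)
  | .lit i _ => 2*n - 1 - (i:ℕ)
  | .clause j => n/2 + 2*n - maxI φ j
  | .inner j t s => min (2*n - 1 - iT φ j t + (n/2 - (s:ℕ))) (n/2 + 2*n + 1 - maxI φ j + (s:ℕ))

/-- lower bound on distance from `clause j0`. -/
def hPot (φ : Fin m → Fin 3 → Fin n × Bool) (j0 : Fin m) : Vert n m → ℕ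
  | .chain k => if (k:ℕ) < n then n/2 + 1 + (n - (k:ℕ)) + minI φ j0
      else n/2 + 1 + ((k:ℕ) - maxI φ j0)
  | .lit i b => n/2 + 1 + litd φ j0 (i, b)
  | .clause j => if j = j0 then 0 else n + 2 + litcd φ j0 j
  | .inner j t s => if j = j0 then 1 + (s:ℕ)
      else min (n/2 + 1 + litd φ j0 (φ j t) + (n/2 - (s:ℕ))) (n + 3 + litcd φ j0 j + (s:ℕ))

lemma fPot_lip (hn : n % 2 = 0) (h4 : 4 ≤ n) :
    ∀ u v, satRel n m φ u v → fPot φ u ≤ fPot φ v + 1 ∧ fPot φ v ≤ fPot φ u + 1 := by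
  rintro (⟨i,b⟩|k|j|⟨j,t,s⟩) (⟨i',b'⟩|k'|j'|⟨j',t',s'⟩) h <;> simp only [satRel] at h
  · -- lit lit
    have hi := i.isLt; have hi' := i'.isLt
    rcases h with ⟨rfl, -⟩ | h <;> simp only [fPot] <;> omega
  · -- chain lit
    have hk := k.isLt; have hi := i'.isLt
    simp only [fPot]; split_ifs <;> omega
  · -- chain chain
    have hk := k.isLt; have hk' := k'.isLt
    simp only [fPot]; split_ifs <;> omega
  · -- clause inner
    obtain ⟨rfl, hs⟩ := h
    have h1 := (iT_bounds (φ := φ) j t').1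
    have h2 := iT_lt (φ := φ) j t'
    have h3 := s'.isLt
    simp only [fPot]; omega
  · -- inner lit
    obtain ⟨hs, he⟩ := h
    have hiT : iT φ j t = (i':ℕ) := by rw [iT, he]
    have h1 := (iT_bounds (φ := φ) j t).1
    have h2 := iT_lt (φ := φ) j t
    have h3 := s.isLt
    have hi' := i'.isLt
    simp only [fPot]; omega
  · -- inner inner
    obtain ⟨rfl, rfl, hs⟩ := h
    have h1 := (iT_bounds (φ := φ) j t).1
    have h2 := iT_lt (φ := φ) j t
    have h3 := s.isLt; have h4' := s'.isLt
    simp only [fPot]; omega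

lemma gPot_lip (hn : n % 2 = 0) (h4 : 4 ≤ n) :
    ∀ u v, satRel n m φ u v → gPot φ u ≤ gPot φ v + 1 ∧ gPot φ v ≤ gPot φ u + 1 := by
  have hmax : ∀ j : Fin m, maxI φ j < n := fun j => maxI_lt j (by omega)
  rintro (⟨i,b⟩|k|j|⟨j,t,s⟩) (⟨i',b'⟩|k'|j'|⟨j',t',s'⟩) h <;> simp only [satRel] at h
  · have hi := i.isLt; have hi' := i'.isLt
    rcases h with ⟨rfl, -⟩ | h <;> simp only [gPot] <;> omega
  · have hk := k.isLt; have hi := i'.isLt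
    simp only [gPot]; split_ifs <;> omega
  · have hk := k.isLt; have hk' := k'.isLt
    simp only [gPot]; split_ifs <;> omega
  · obtain ⟨rfl, hs⟩ := h
    have h1 := (iT_bounds (φ := φ) j t').2
    have h2 := iT_lt (φ := φ) j t'
    have h3 := s'.isLt
    have h5 := hmax j
    simp only [gPot]; omega
  · obtain ⟨hs, he⟩ := h
    have hiT : iT φ j t = (i':ℕ) := by rw [iT, he]
    have h1 := (iT_bounds (φ := φ) j t).2
    have h2 := iT_lt (φ := φ) j t
    have h3 := s.isLt
    have hi' := i'.isLt
    have h5 := hmax j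
    simp only [gPot]; omega
  · obtain ⟨rfl, rfl, hs⟩ := h
    have h1 := (iT_bounds (φ := φ) j t).2
    have h2 := iT_lt (φ := φ) j t
    have h3 := s.isLt; have h4' := s'.isLt
    have h5 := hmax j
    simp only [gPot]; omega

lemma hPot_lip (hn : n % 2 = 0) (h4 : 4 ≤ n) (j0 : Fin m) :
    ∀ u v, satRel n m φ u v →
      hPot φ j0 u ≤ hPot φ j0 v + 1 ∧ hPot φ j0 v ≤ hPot φ j0 u + 1 := by
  have hmax : maxI φ j0 < n := maxI_lt j0 (by omega)
  rintro (⟨i,b⟩|k|j|⟨j,t,s⟩) (⟨i',b'⟩|k'|j'|⟨j',t',s'⟩) h <;> simp only [satRel] at h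
  · -- lit lit
    have hld : ((((i,b) : Fin n × Bool).1 : ℕ) = (((i',b') : Fin n × Bool).1 : ℕ)
        ∧ ((i,b) : Fin n × Bool).2 ≠ ((i',b') : Fin n × Bool).2)
        ∨ (((i,b) : Fin n × Bool).1 : ℕ) + 1 = (((i',b') : Fin n × Bool).1 : ℕ) := by
      rcases h with ⟨rfl, hb⟩ | h
      · exact Or.inl ⟨rfl, hb⟩
      · exact Or.inr h
    have := litd_lip (φ := φ) (j := j0) hld
    simp only [hPot]; omega
  · -- chain lit
    have hk := k.isLt; have hi := i'.isLt
    have hmm := minI_le_maxI (φ := φ) j0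
    rcases h with ⟨hk1, hi1⟩ | ⟨hk1, hi1⟩
    · have := litd_level0 (φ := φ) (j := j0) (y := (i', b')) hi1
      simp only [hPot]; split_ifs <;> omega
    · have := litd_leveltop (φ := φ) (j := j0) (y := (i', b')) hi1 (by omega)
      simp only [hPot]; split_ifs <;> omega
  · -- chain chain
    have hk := k.isLt; have hk' := k'.isLt
    have hmm := minI_le_maxI (φ := φ) j0
    simp only [hPot]; split_ifs <;> omega
  · -- clause inner
    obtain ⟨rfl, hs⟩ := h
    have h3 := s'.isLt
    have h5 := litcd_le (φ := φ) j0 j t'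
    simp only [hPot]; split_ifs <;> omega
  · -- inner lit
    obtain ⟨hs, he⟩ := h
    have h3 := s.isLt
    have hlee : litd φ j0 (φ j t) = litd φ j0 (i', b') := by rw [he]
    have h6 : litd φ j0 (i', b') ≤ n - 1 := le_trans (litd_le j0 0 _) (ld_le (by omega))
    have h5 := litcd_le (φ := φ) j0 j t
    simp only [hPot]; split_ifs with hj
    · have he' : φ j0 t = (i', b') := hj ▸ he
      have h7 := litd_le (φ := φ) j0 t (i', b')
      rw [he', ld_self] at h7
      omega
    · omega
  · -- inner inner
    obtain ⟨rfl, rfl, hs⟩ := h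
    have h3 := s.isLt; have h4' := s'.isLt
    simp only [hPot]; split_ifs <;> omega

end GphiAux

namespace GphiAux
variable {n m : ℕ} {φ : Fin m → Fin 3 → Fin n × Bool}

lemma wtrans {G : SimpleGraph (Vert n m)} {a b c : Vert n m} {x y : ℕ}
    (h1 : ∃ p : G.Walk a b, p.length ≤ x) (h2 : ∃ q : G.Walk b c, q.length ≤ y) :
    ∃ r : G.Walk a c, r.length ≤ x + y := by
  obtain ⟨p, hp⟩ := h1; obtain ⟨q, hq⟩ := h2
  exact ⟨p.append q, by rw [SimpleGraph.Walk.length_append]; omega⟩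

lemma wrev {G : SimpleGraph (Vert n m)} {a b : Vert n m} {x : ℕ}
    (h1 : ∃ p : G.Walk a b, p.length ≤ x) : ∃ p : G.Walk b a, p.length ≤ x := by
  obtain ⟨p, hp⟩ := h1
  exact ⟨p.reverse, by simpa using hp⟩

lemma wadj {G : SimpleGraph (Vert n m)} {a b : Vert n m} (h : G.Adj a b) :
    ∃ p : G.Walk a b, p.length ≤ 1 :=
  ⟨SimpleGraph.Walk.cons h .nil, by simp⟩

lemma wrefl {G : SimpleGraph (Vert n m)} {a : Vert n m} :
    ∃ p : G.Walk a a, p.length ≤ 0 := ⟨.nil, by simp⟩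

/-- walk along one of the two chains -/
lemma wchain (h4 : 4 ≤ n) (a b : Fin (2*n)) (hab : (a:ℕ) ≤ b)
    (hside : (b:ℕ) < n ∨ n ≤ (a:ℕ)) :
    ∃ p : (Gphi n m φ).Walk (.chain a) (.chain b), p.length ≤ (b:ℕ) - a := by
  have hb := b.isLt
  obtain ⟨p, hl, -⟩ := walk_between (G := Gphi n m φ)
    (x := Vert.chain a) (y := Vert.chain b)
    (fun i => (Vert.chain ⟨(a:ℕ) + min i ((b:ℕ) - a), by omega⟩ : Vert n m))
    ((b:ℕ) - a)
    (fun i hi => adj_cc (by simp; omega) (by simp; omega))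
    (by congr 1) (by congr 1; ext; simp; omega)
  exact ⟨p, by omega⟩

/-- walk along the ladder, with increasing level -/
lemma wlit_lt (i i' : Fin n) (b b' : Bool) (hii : (i:ℕ) < i') :
    ∃ p : (Gphi n m φ).Walk (.lit i b) (.lit i' b'), p.length ≤ (i':ℕ) - i := by
  have hi' := i'.isLt
  obtain ⟨p, hl, -⟩ := walk_between (G := Gphi n m φ)
    (x := Vert.lit i b) (y := Vert.lit i' b')
    (fun k => if h : (i:ℕ) + k < (i':ℕ) then (Vert.lit ⟨(i:ℕ) + k, by omega⟩ b : Vert n m)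
      else Vert.lit i' b')
    ((i':ℕ) - i)
    (by
      intro k hk
      by_cases h1 : (i:ℕ) + k < (i':ℕ)
      · by_cases h2 : (i:ℕ) + (k+1) < (i':ℕ)
        · rw [dif_pos h1, dif_pos h2]
          exact adj_ll (Or.inr (by simp; omega))
        · rw [dif_pos h1, dif_neg h2]
          exact adj_ll (Or.inr (by simp; omega))
      · omega)
    (by rw [dif_pos (by omega)]; congr 1)
    (by rw [dif_neg (by omega)])
  exact ⟨p, by omega⟩

/-- general ladder walk -/
lemma wlit (i i' : Fin n) (b b' : Bool) :
    ∃ p : (Gphi n m φ).Walk (.lit i b) (.lit i' b'), p.length ≤ ld (i, b) (i', b') := by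
  rcases Nat.lt_trichotomy (i:ℕ) (i':ℕ) with h | h | h
  · obtain ⟨p, hp⟩ := wlit_lt (φ := φ) i i' b b' h
    refine ⟨p, le_trans hp ?_⟩
    unfold ld
    rw [if_neg (fun hc => by have hc' : (i:ℕ) = (i':ℕ) := congrArg Fin.val hc; omega)]
    simp; omega
  · have : i = i' := Fin.ext h
    subst this
    by_cases hb : b = b'
    · subst hb; exact ⟨.nil, by simp [ld]⟩
    · refine ⟨.cons (adj_ll (Or.inl ⟨rfl, hb⟩)) .nil, ?_⟩
      simp [ld, hb]
  · obtain ⟨p, hp⟩ := wlit_lt (φ := φ) i' i b' b h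
    refine ⟨p.reverse, le_trans (by simpa using hp) ?_⟩
    unfold ld
    rw [if_neg (fun hc => by have hc' : (i:ℕ) = (i':ℕ) := congrArg Fin.val hc; omega)]
    simp; omega

/-- the gadget path from a clause vertex to one of its literal vertices -/
lemma wgad (hn : n % 2 = 0) (h4 : 4 ≤ n) (j : Fin m) (t : Fin 3) :
    ∃ p : (Gphi n m φ).Walk (.clause j) (.lit (φ j t).1 (φ j t).2),
      p.length ≤ n/2 + 1 := by
  obtain ⟨p, hl, -⟩ := walk_between (G := Gphi n m φ)
    (x := Vert.clause j) (y := Vert.lit (φ j t).1 (φ j t).2)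
    (fun k => if k = 0 then (Vert.clause j : Vert n m)
      else if h : k ≤ n/2 then Vert.inner j t ⟨k-1, by omega⟩
      else Vert.lit (φ j t).1 (φ j t).2)
    (n/2 + 1)
    (by
      intro k hk
      by_cases h0 : k = 0
      · subst h0
        rw [if_pos rfl, if_neg (by omega), dif_pos (by omega)]
        exact adj_cli (by simp)
      · rw [if_neg h0, if_neg (by omega)]
        by_cases h1 : k ≤ n/2 - 1
        · rw [dif_pos (by omega), dif_pos (by omega)]
          exact adj_ii (by simp; omega)
        · have hk2 : k = n/2 := by omega
          rw [dif_pos (by omega), dif_neg (by omega)]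
          exact adj_il (by simp; omega) rfl)
    (by rw [if_pos rfl])
    (by rw [if_neg (by omega), dif_neg (by omega)])
  exact ⟨p, by omega⟩

/-- walk from an inner gadget vertex out to its literal vertex -/
lemma winner (hn : n % 2 = 0) (h4 : 4 ≤ n) (j : Fin m) (t : Fin 3) (s : Fin (n/2)) :
    ∃ p : (Gphi n m φ).Walk (.inner j t s) (.lit (φ j t).1 (φ j t).2),
      p.length ≤ n/2 - (s:ℕ) := by
  have hs := s.isLt
  obtain ⟨p, hl, -⟩ := walk_between (G := Gphi n m φ)
    (x := Vert.inner j t s) (y := Vert.lit (φ j t).1 (φ j t).2)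
    (fun k => if h : (s:ℕ) + k < n/2 then (Vert.inner j t ⟨(s:ℕ) + k, h⟩ : Vert n m)
      else Vert.lit (φ j t).1 (φ j t).2)
    (n/2 - (s:ℕ))
    (by
      intro k hk
      by_cases h2 : (s:ℕ) + (k+1) < n/2
      · rw [dif_pos (by omega), dif_pos h2]
        exact adj_ii (by simp; omega)
      · rw [dif_pos (by omega), dif_neg h2]
        exact adj_il (by simp; omega) rfl)
    (by rw [dif_pos (by omega)]; congr 1)
    (by rw [dif_neg (by omega)])
  exact ⟨p, by omega⟩

/-- walk from a clause vertex to an inner vertex of one of its gadget paths -/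
lemma wclause_inner (hn : n % 2 = 0) (h4 : 4 ≤ n) (j : Fin m) (t : Fin 3) (s : Fin (n/2)) :
    ∃ p : (Gphi n m φ).Walk (.clause j) (.inner j t s), p.length ≤ (s:ℕ) + 1 := by
  have hs := s.isLt
  obtain ⟨p, hl, -⟩ := walk_between (G := Gphi n m φ)
    (x := Vert.clause j) (y := Vert.inner j t s)
    (fun k => if k = 0 then (Vert.clause j : Vert n m)
      else Vert.inner j t ⟨min (k-1) (s:ℕ), by omega⟩)
    ((s:ℕ) + 1)
    (by
      intro k hk
      split_ifs with ha hb hb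
      all_goals first
        | exact hb.elim
        | omega
        | exact adj_cli (by simp; omega)
        | exact adj_cli (by omega)
        | exact adj_ii (by simp; omega)
        | exact adj_ii (by omega))
    (by rw [if_pos rfl])
    (by rw [if_neg (by omega)]; congr 1; ext; simp)
  exact ⟨p, by omega⟩

end GphiAux

namespace GphiAux
variable {n m : ℕ} {φ : Fin m → Fin 3 → Fin n × Bool}

lemma ld_from (i0 i : Fin n) (b : Bool) :
    ld (i0, if (i:ℕ) = (i0:ℕ) then b else true) (i, b)
      ≤ max (i0:ℕ) (i:ℕ) - min (i0:ℕ) (i:ℕ) := by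
  by_cases h0 : (i:ℕ) = (i0:ℕ)
  · rw [if_pos h0]
    unfold ld; dsimp only
    rw [if_pos (Fin.ext h0.symm), if_pos rfl]
    exact Nat.zero_le _
  · rw [if_neg h0]
    unfold ld; dsimp only
    rw [if_neg (fun hc => h0 (by rw [Fin.ext_iff] at hc; omega))]

/-- composite walk from a chain vertex to any literal vertex -/
lemma wcl (hn : n % 2 = 0) (h4 : 4 ≤ n) (k : Fin (2*n)) (i : Fin n) (b : Bool) :
    ∃ p : (Gphi n m φ).Walk (.chain k) (.lit i b),
      p.length ≤ if (k:ℕ) < n then (n - k) + i else ((k:ℕ) - n) + 1 + (n - 1 - i) := by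
  have hk := k.isLt; have hi := i.isLt
  by_cases hkn : (k:ℕ) < n
  · rw [if_pos hkn]
    have h1 := wchain (φ := φ) h4 k ⟨n-1, by omega⟩ (by dsimp only; omega) (by dsimp only; omega)
    have h2 : ∃ p : (Gphi n m φ).Walk (.chain ⟨n-1, by omega⟩)
        (.lit ⟨0, by omega⟩ (if (i:ℕ) = 0 then b else true)), p.length ≤ 1 :=
      wadj (adj_cl (Or.inl (by simp)))
    have h3 := wlit (φ := φ) ⟨0, by omega⟩ i (if (i:ℕ) = 0 then b else true) b
    have h4' := ld_from (⟨0, by omega⟩ : Fin n) i b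
    obtain ⟨p, hp⟩ := wtrans h1 (wtrans h2 h3)
    refine ⟨p, le_trans hp ?_⟩
    dsimp only at h4' ⊢
    omega
  · rw [if_neg hkn]
    have h1 := wchain (φ := φ) h4 ⟨n, by omega⟩ k (by dsimp only; omega) (by dsimp only; omega)
    have h2 : ∃ p : (Gphi n m φ).Walk (.chain ⟨n, by omega⟩)
        (.lit ⟨n-1, by omega⟩ (if (i:ℕ) = n-1 then b else true)), p.length ≤ 1 :=
      wadj (adj_cl (Or.inr (by simp)))
    have h3 := wlit (φ := φ) ⟨n-1, by omega⟩ i (if (i:ℕ) = n-1 then b else true) b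
    have h4' := ld_from (⟨n-1, by omega⟩ : Fin n) i b
    obtain ⟨p, hp⟩ := wtrans (wrev h1) (wtrans h2 h3)
    refine ⟨p, le_trans hp ?_⟩
    dsimp only at h4' ⊢
    omega

/-- composite walk from a clause vertex to any literal vertex -/
lemma wclauselit (hn : n % 2 = 0) (h4 : 4 ≤ n) (j : Fin m) (i : Fin n) (b : Bool) :
    ∃ p : (Gphi n m φ).Walk (.clause j) (.lit i b), p.length ≤ n/2 + n := by
  obtain ⟨p, hp⟩ := wtrans (wgad hn h4 j 0) (wlit (φ j 0).1 i (φ j 0).2 b)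
  have := ld_le (n := n) (x := ((φ j 0).1, (φ j 0).2)) (y := (i, b)) (by omega)
  exact ⟨p, by omega⟩

/-- composite walk from a clause vertex to any chain vertex -/
lemma wclausechain (hn : n % 2 = 0) (h4 : 4 ≤ n) (j : Fin m) (k : Fin (2*n)) :
    ∃ p : (Gphi n m φ).Walk (.clause j) (.chain k), p.length ≤ 3*n - 2 := by
  obtain ⟨p, hp⟩ := wtrans (wgad hn h4 j 0) (wrev (wcl hn h4 k (φ j 0).1 (φ j 0).2))
  have h1 := iT_lt (φ := φ) j 0
  have hk := k.isLt
  refine ⟨p, le_trans hp ?_⟩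
  rw [iT] at h1
  split_ifs at * <;> omega

/-- composite walk from an inner vertex to any literal vertex -/
lemma winnerlit (hn : n % 2 = 0) (h4 : 4 ≤ n) (j : Fin m) (t : Fin 3) (s : Fin (n/2))
    (i : Fin n) (b : Bool) :
    ∃ p : (Gphi n m φ).Walk (.inner j t s) (.lit i b), p.length ≤ n/2 + (n-1) := by
  obtain ⟨p, hp⟩ := wtrans (winner hn h4 j t s) (wlit (φ j t).1 i (φ j t).2 b)
  have := ld_le (n := n) (x := ((φ j t).1, (φ j t).2)) (y := (i, b)) (by omega)
  exact ⟨p, by omega⟩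

lemma classify (hn : n % 2 = 0) (h4 : 4 ≤ n) (u v : Vert n m) :
    ((u = Vert.chain ⟨0, by omega⟩ ∧ v = Vert.chain ⟨2*n-1, by omega⟩) ∨
     (v = Vert.chain ⟨0, by omega⟩ ∧ u = Vert.chain ⟨2*n-1, by omega⟩)) ∨
    ∃ p : (Gphi n m φ).Walk u v, p.length ≤ 3*n - 2 := by
  rcases u with ⟨i,b⟩|k|j|⟨j,t,s⟩ <;> rcases v with ⟨i',b'⟩|k'|j'|⟨j',t',s'⟩
  · -- lit lit
    right
    obtain ⟨p, hp⟩ := wlit (φ := φ) i i' b b'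
    have := ld_le (n := n) (x := (i,b)) (y := (i',b')) (by omega)
    exact ⟨p, by omega⟩
  · -- lit chain
    right
    obtain ⟨p, hp⟩ := wrev (wcl hn h4 k' i b)
    have hk := k'.isLt; have hi := i.isLt
    refine ⟨p, le_trans hp ?_⟩
    split_ifs <;> omega
  · -- lit clause
    right
    obtain ⟨p, hp⟩ := wrev (wclauselit hn h4 j' i b)
    exact ⟨p, by omega⟩
  · -- lit inner
    right
    obtain ⟨p, hp⟩ := wrev (winnerlit hn h4 j' t' s' i b)
    exact ⟨p, by omega⟩
  · -- chain lit
    right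
    obtain ⟨p, hp⟩ := wcl hn h4 k i' b'
    have hk := k.isLt; have hi := i'.isLt
    refine ⟨p, le_trans hp ?_⟩
    split_ifs <;> omega
  · -- chain chain
    have hk := k.isLt; have hk' := k'.isLt
    by_cases hs : ((k:ℕ) < n ∧ (k':ℕ) < n) ∨ (n ≤ (k:ℕ) ∧ n ≤ (k':ℕ))
    · right
      rcases Nat.le_total (k:ℕ) (k':ℕ) with hle | hle
      · obtain ⟨p, hp⟩ := wchain (φ := φ) h4 k k' hle (by omega)
        exact ⟨p, by omega⟩
      · obtain ⟨p, hp⟩ := wrev (wchain (φ := φ) h4 k' k hle (by omega))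
        exact ⟨p, by omega⟩
    · -- cross pair
      have hcross : ((k:ℕ) < n ∧ n ≤ (k':ℕ)) ∨ ((k':ℕ) < n ∧ n ≤ (k:ℕ)) := by omega
      by_cases hsp : ((k:ℕ) = 0 ∧ (k':ℕ) = 2*n-1) ∨ ((k':ℕ) = 0 ∧ (k:ℕ) = 2*n-1)
      · left
        rcases hsp with ⟨h1, h2⟩ | ⟨h1, h2⟩
        · exact Or.inl ⟨by congr 1; ext; simp [h1], by congr 1; ext; simp [h2]⟩
        · exact Or.inr ⟨by congr 1; ext; simp [h1], by congr 1; ext; simp [h2]⟩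
      · right
        obtain ⟨p, hp⟩ := wtrans (wcl hn h4 k ⟨0, by omega⟩ true)
          (wrev (wcl hn h4 k' ⟨0, by omega⟩ true))
        refine ⟨p, le_trans hp ?_⟩
        simp only [Fin.val_mk]
        split_ifs <;> omega
  · -- chain clause
    right
    obtain ⟨p, hp⟩ := wrev (wclausechain hn h4 j' k)
    exact ⟨p, hp⟩
  · -- chain inner
    right
    obtain ⟨p, hp⟩ := wtrans (wcl hn h4 k (φ j' t').1 (φ j' t').2)
      (wrev (winner hn h4 j' t' s'))
    have h1 := iT_lt (φ := φ) j' t'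
    have hk := k.isLt
    refine ⟨p, le_trans hp ?_⟩
    rw [iT] at h1
    split_ifs at * <;> omega
  · -- clause lit
    right
    obtain ⟨p, hp⟩ := wclauselit hn h4 j i' b'
    exact ⟨p, by omega⟩
  · -- clause chain
    right
    exact wclausechain hn h4 j k'
  · -- clause clause
    right
    obtain ⟨p, hp⟩ := wtrans (wclauselit hn h4 j (φ j' 0).1 (φ j' 0).2)
      (wrev (wgad hn h4 j' 0))
    exact ⟨p, by omega⟩
  · -- clause inner
    right
    obtain ⟨p, hp⟩ := wtrans (wclauselit hn h4 j (φ j' t').1 (φ j' t').2)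
      (wrev (winner hn h4 j' t' s'))
    exact ⟨p, by omega⟩
  · -- inner lit
    right
    obtain ⟨p, hp⟩ := winnerlit hn h4 j t s i' b'
    exact ⟨p, by omega⟩
  · -- inner chain
    right
    obtain ⟨p, hp⟩ := wtrans (winner hn h4 j t s)
      (wrev (wcl hn h4 k' (φ j t).1 (φ j t).2))
    have h1 := iT_lt (φ := φ) j t
    have hk := k'.isLt
    refine ⟨p, le_trans hp ?_⟩
    rw [iT] at h1
    split_ifs at * <;> omega
  · -- inner clause
    right
    obtain ⟨p, hp⟩ := wtrans (winnerlit hn h4 j t s (φ j' 0).1 (φ j' 0).2)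
      (wrev (wgad hn h4 j' 0))
    exact ⟨p, by omega⟩
  · -- inner inner
    right
    obtain ⟨p, hp⟩ := wtrans (winnerlit hn h4 j t s (φ j' t').1 (φ j' t').2)
      (wrev (winner hn h4 j' t' s'))
    exact ⟨p, by omega⟩

/-- every pair of vertices is joined by a walk of length at most `3n-1` -/
lemma wall (hn : n % 2 = 0) (h4 : 4 ≤ n) (u v : Vert n m) :
    ∃ p : (Gphi n m φ).Walk u v, p.length ≤ 3*n - 1 := by
  rcases classify (φ := φ) hn h4 u v with (⟨h1, h2⟩ | ⟨h1, h2⟩) | ⟨p, hp⟩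
  · subst h1; subst h2
    obtain ⟨p, hp⟩ := wtrans (wcl hn h4 ⟨0, by omega⟩ ⟨0, by omega⟩ true)
      (wrev (wcl hn h4 ⟨2*n-1, by omega⟩ ⟨0, by omega⟩ true))
    refine ⟨p, le_trans hp ?_⟩
    simp only [Fin.val_mk]
    split_ifs <;> omega
  · subst h1; subst h2
    obtain ⟨p, hp⟩ := wtrans (wcl hn h4 ⟨2*n-1, by omega⟩ ⟨0, by omega⟩ true)
      (wrev (wcl hn h4 ⟨0, by omega⟩ ⟨0, by omega⟩ true))
    refine ⟨p, le_trans hp ?_⟩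
    simp only [Fin.val_mk]
    split_ifs <;> omega
  · exact ⟨p, by omega⟩

lemma gconn (hn : n % 2 = 0) (h4 : 4 ≤ n) : (Gphi n m φ).Connected := by
  rw [SimpleGraph.connected_iff]
  refine ⟨fun u v => ?_, ⟨Vert.chain ⟨0, by omega⟩⟩⟩
  obtain ⟨p, -⟩ := wall (φ := φ) hn h4 u v
  exact ⟨p⟩

end GphiAux

namespace GphiAux
variable {n m : ℕ} {φ : Fin m → Fin 3 → Fin n × Bool}

lemma lip_adj (P : Vert n m → ℕ)
    (hP : ∀ u v, satRel n m φ u v → P u ≤ P v + 1 ∧ P v ≤ P u + 1) :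
    ∀ u v, (Gphi n m φ).Adj u v → P u ≤ P v + 1 ∧ P v ≤ P u + 1 := by
  intro u v h
  rw [Gphi, SimpleGraph.fromRel_adj] at h
  obtain ⟨-, h | h⟩ := h
  · exact hP u v h
  · exact (hP v u h).symm

lemma pot_le_dist (P : Vert n m → ℕ)
    (hP : ∀ u v, satRel n m φ u v → P u ≤ P v + 1 ∧ P v ≤ P u + 1)
    {u v : Vert n m} (hr : (Gphi n m φ).Reachable u v) :
    P v ≤ P u + (Gphi n m φ).dist u v := by
  obtain ⟨p, hp⟩ := hr.exists_walk_length_eq_dist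
  rw [← hp]
  exact pot_le_of_walk P (lip_adj P hP) p

lemma fPot_chain0 (h4 : 4 ≤ n) (a : Fin (2*n)) (ha : (a:ℕ) = 0) :
    fPot φ (.chain a) = 0 := by
  simp only [fPot]; rw [ha, if_pos (by omega)]

lemma fPot_chainlast (h4 : 4 ≤ n) (a : Fin (2*n)) (ha : (a:ℕ) = 2*n-1) :
    fPot φ (.chain a) = 3*n - 1 := by
  simp only [fPot]; rw [ha, if_neg (by omega)]; omega

lemma gPot_chainlast (h4 : 4 ≤ n) (a : Fin (2*n)) (ha : (a:ℕ) = 2*n-1) :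
    gPot φ (.chain a) = 0 := by
  simp only [gPot]; rw [ha, if_neg (by omega)]; omega

lemma dist_ends (hn : n % 2 = 0) (h4 : 4 ≤ n) :
    (Gphi n m φ).dist (.chain ⟨0, by omega⟩) (.chain ⟨2*n-1, by omega⟩) = 3*n - 1 := by
  apply le_antisymm
  · obtain ⟨p, hp⟩ := wall (φ := φ) hn h4
      (Vert.chain ⟨0, by omega⟩) (Vert.chain ⟨2*n-1, by omega⟩)
    exact le_trans (SimpleGraph.dist_le p) hp
  · have hr := (gconn (φ := φ) hn h4).preconnected
      (Vert.chain ⟨0, by omega⟩) (Vert.chain ⟨2*n-1, by omega⟩)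
    have h := pot_le_dist (fPot φ) (fPot_lip hn h4) hr
    have e0 : fPot φ (Vert.chain ⟨0, by omega⟩ : Vert n m) = 0 :=
      fPot_chain0 h4 _ rfl
    have e1 : fPot φ (Vert.chain ⟨2*n-1, by omega⟩ : Vert n m) = 3*n - 1 :=
      fPot_chainlast h4 _ rfl
    omega

set_option maxHeartbeats 1000000 in
lemma diam_eq (hn : n % 2 = 0) (h4 : 4 ≤ n) : (Gphi n m φ).diam = 3*n - 1 := by
  have hub : (Gphi n m φ).ediam ≤ ((3*n-1 : ℕ) : ℕ∞) := by
    apply SimpleGraph.ediam_le_of_edist_le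
    intro u v
    obtain ⟨p, hp⟩ := wall (φ := φ) hn h4 u v
    exact le_trans (SimpleGraph.Walk.edist_le p) (by exact_mod_cast hp)
  have hr := (gconn (φ := φ) hn h4).preconnected
      (Vert.chain ⟨0, by omega⟩) (Vert.chain ⟨2*n-1, by omega⟩)
  have hne : (Gphi n m φ).edist (Vert.chain ⟨0, by omega⟩ : Vert n m)
      (Vert.chain ⟨2*n-1, by omega⟩) ≠ ⊤ :=
    (SimpleGraph.edist_ne_top_iff_reachable).mpr hr
  have hdist := dist_ends (φ := φ) hn h4
  have hedist : (Gphi n m φ).edist (Vert.chain ⟨0, by omega⟩ : Vert n m)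
      (Vert.chain ⟨2*n-1, by omega⟩) = ((3*n-1 : ℕ) : ℕ∞) := by
    rw [← hdist]
    exact (ENat.coe_toNat hne).symm
  have hediam : (Gphi n m φ).ediam = ((3*n-1 : ℕ) : ℕ∞) := by
    have hlb := SimpleGraph.edist_le_ediam (G := Gphi n m φ)
      (u := (Vert.chain ⟨0, by omega⟩ : Vert n m)) (v := Vert.chain ⟨2*n-1, by omega⟩)
    rw [hedist] at hlb
    exact le_antisymm hub hlb
  show (Gphi n m φ).ediam.toNat = 3*n - 1
  rw [hediam, ENat.toNat_coe]

end GphiAux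

namespace GphiAux
variable {n m : ℕ} {φ : Fin m → Fin 3 → Fin n × Bool}

/-- the canonical diametral path determined by an assignment `A` -/
lemma canonical (hn : n % 2 = 0) (h4 : 4 ≤ n) (A : Fin n → Bool) :
    ∃ p : (Gphi n m φ).Walk (.chain ⟨0, by omega⟩) (.chain ⟨2*n-1, by omega⟩),
      p.length = 3*n - 1 ∧ (∀ k : Fin (2*n), Vert.chain k ∈ p.support) ∧
      (∀ i : Fin n, Vert.lit i (A i) ∈ p.support) := by
  obtain ⟨p, hl, hs⟩ := walk_between (G := Gphi n m φ)
    (x := Vert.chain ⟨0, by omega⟩) (y := Vert.chain ⟨2*n-1, by omega⟩)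
    (fun k => if h : k < n then (Vert.chain ⟨k, by omega⟩ : Vert n m)
      else if h2 : k < 2*n then Vert.lit ⟨k - n, by omega⟩ (A ⟨k - n, by omega⟩)
      else if h3 : k < 3*n then Vert.chain ⟨k - n, by omega⟩
      else Vert.chain ⟨0, by omega⟩)
    (3*n - 1)
    (by
      intro k hk
      by_cases h1 : k + 1 < n
      · rw [dif_pos (by omega), dif_pos h1]
        exact adj_cc (by simp only [Fin.val_mk]) (by simp only [Fin.val_mk]; omega)
      · by_cases h2 : k + 1 = n
        · rw [dif_pos (by omega), dif_neg (by omega), dif_pos (by omega)]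
          exact adj_cl (Or.inl ⟨by simp only [Fin.val_mk]; omega, by simp only [Fin.val_mk]; omega⟩)
        · by_cases h3 : k + 1 < 2*n
          · rw [dif_neg (by omega), dif_pos (by omega), dif_neg (by omega),
              dif_pos (by omega)]
            exact adj_ll (Or.inr (by simp only [Fin.val_mk]; omega))
          · by_cases h5 : k + 1 = 2*n
            · rw [dif_neg (by omega), dif_pos (by omega), dif_neg (by omega),
                dif_neg (by omega), dif_pos (by omega)]
              exact (adj_cl (Or.inr ⟨by simp only [Fin.val_mk]; omega, by simp only [Fin.val_mk]; omega⟩)).symm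
            · rw [dif_neg (by omega), dif_neg (by omega), dif_pos (by omega),
                dif_neg (by omega), dif_neg (by omega), dif_pos (by omega)]
              exact adj_cc (by simp only [Fin.val_mk]; omega)
                (by simp only [Fin.val_mk]; omega))
    (by rw [dif_pos (by omega)])
    (by
      rw [dif_neg (by omega), dif_neg (by omega), dif_pos (by omega)]
      congr 1; ext; simp; omega)
  refine ⟨p, hl, fun k => ?_, fun i => ?_⟩
  · have hk := k.isLt
    by_cases h1 : (k:ℕ) < n
    · have := hs (k:ℕ) (by omega)
      rwa [dif_pos h1, show (⟨(k:ℕ), by omega⟩ : Fin (2*n)) = k from Fin.ext rfl] at this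
    · have := hs ((k:ℕ) + n) (by omega)
      rw [dif_neg (by omega), dif_neg (by omega), dif_pos (by omega)] at this
      rwa [show (⟨(k:ℕ) + n - n, by omega⟩ : Fin (2*n)) = k from Fin.ext (by simp)] at this
  · have hi := i.isLt
    have := hs (n + (i:ℕ)) (by omega)
    rw [dif_neg (by omega), dif_pos (by omega)] at this
    rwa [show (⟨n + (i:ℕ) - n, by omega⟩ : Fin n) = i from Fin.ext (by simp)] at this

lemma laminar_of_sat (hn : n % 2 = 0) (h4 : 4 ≤ n)
    (A : Fin n → Bool) (hA : ∀ j : Fin m, ∃ t : Fin 3, A (φ j t).1 = (φ j t).2) :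
    ∃ (u v : Vert n m) (p : (Gphi n m φ).Walk u v),
      (p.length = (Gphi n m φ).dist u v ∧ (Gphi n m φ).dist u v = (Gphi n m φ).diam) ∧
      (∀ x : Vert n m, ∃ y ∈ p.support, (Gphi n m φ).dist x y ≤ n/2 + 1) := by
  obtain ⟨p, hl, hsc, hsl⟩ := canonical (φ := φ) hn h4 A
  have hde := dist_ends (φ := φ) hn h4
  have hdi := diam_eq (φ := φ) hn h4
  refine ⟨_, _, p, ⟨by omega, by omega⟩, fun x => ?_⟩
  rcases x with ⟨i,b⟩|k|j|⟨j,t,s⟩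
  · refine ⟨Vert.lit i (A i), hsl i, ?_⟩
    obtain ⟨q, hq⟩ := wlit (φ := φ) i i b (A i)
    have h1 : ld ((i : Fin n), b) (i, A i) ≤ 1 := ld_same_fst rfl
    have := SimpleGraph.dist_le q
    omega
  · exact ⟨Vert.chain k, hsc k, by rw [SimpleGraph.dist_self]; omega⟩
  · obtain ⟨t, ht⟩ := hA j
    refine ⟨Vert.lit (φ j t).1 (A (φ j t).1), hsl _, ?_⟩
    rw [ht]
    obtain ⟨q, hq⟩ := wgad (φ := φ) hn h4 j t
    have := SimpleGraph.dist_le q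
    omega
  · refine ⟨Vert.lit (φ j t).1 (A (φ j t).1), hsl _, ?_⟩
    obtain ⟨q, hq⟩ := wtrans (winner (φ := φ) hn h4 j t s)
      (wlit (φ j t).1 (φ j t).1 (φ j t).2 (A (φ j t).1))
    have h1 : ld ((φ j t).1, (φ j t).2) ((φ j t).1, A (φ j t).1) ≤ 1 := ld_same_fst rfl
    have := SimpleGraph.dist_le q
    have hs := s.isLt
    omega

end GphiAux

namespace GphiAux
variable {n m : ℕ} {φ : Fin m → Fin 3 → Fin n × Bool}

set_option maxHeartbeats 2000000 in
lemma support_struct (hn : n % 2 = 0) (h4 : 4 ≤ n)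
    (q : (Gphi n m φ).Walk (.chain ⟨0, by omega⟩) (.chain ⟨2*n-1, by omega⟩))
    (hq : q.length = 3*n - 1) :
    ∀ w ∈ q.support, (∃ k, w = Vert.chain k) ∨
      (∃ (i : Fin n) (b : Bool), w = Vert.lit i b ∧ q.getVert (n + (i:ℕ)) = w) := by
  intro w hw
  obtain ⟨k, hk1, hk2⟩ := SimpleGraph.Walk.mem_support_iff_exists_getVert.mp hw
  have hb := getVert_dist_bounds (gconn (φ := φ) hn h4) q k hk2
  rw [hk1] at hb
  have hf := pot_le_dist (fPot φ) (fPot_lip hn h4)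
    ((gconn (φ := φ) hn h4).preconnected (.chain ⟨0, by omega⟩) w)
  rw [fPot_chain0 h4 _ rfl] at hf
  have hg := pot_le_dist (gPot φ) (gPot_lip hn h4)
    ((gconn (φ := φ) hn h4).preconnected (.chain ⟨2*n-1, by omega⟩) w)
  rw [gPot_chainlast h4 _ rfl] at hg
  have hcomm : (Gphi n m φ).dist (Vert.chain ⟨2*n-1, by omega⟩ : Vert n m) w
      = (Gphi n m φ).dist w (Vert.chain ⟨2*n-1, by omega⟩) := SimpleGraph.dist_comm
  rw [hcomm] at hg
  rcases w with ⟨i,b⟩|k'|j|⟨j,t,s⟩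
  · right
    refine ⟨i, b, rfl, ?_⟩
    have hi := i.isLt
    simp only [fPot] at hf
    simp only [gPot] at hg
    have : k = n + (i:ℕ) := by omega
    rw [← this]; exact hk1
  · exact Or.inl ⟨k', rfl⟩
  · exfalso
    have h1 := minI_le_maxI (φ := φ) j
    have h2 := maxI_lt (φ := φ) j (by omega)
    simp only [fPot] at hf
    simp only [gPot] at hg
    omega
  · exfalso
    have h1 := iT_bounds (φ := φ) j t
    have h2 := iT_lt (φ := φ) j t
    have h3 := maxI_lt (φ := φ) j (by omega)
    have h5 := s.isLt
    simp only [fPot] at hf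
    simp only [gPot] at hg
    omega

set_option maxHeartbeats 2000000 in
lemma sat_core (hn : n % 2 = 0) (h4 : 4 ≤ n)
    (q : (Gphi n m φ).Walk (.chain ⟨0, by omega⟩) (.chain ⟨2*n-1, by omega⟩))
    (hq : q.length = 3*n - 1)
    (hdom : ∀ x : Vert n m, ∃ y ∈ q.support, (Gphi n m φ).dist x y ≤ n/2 + 1) :
    ∃ A : Fin n → Bool, ∀ j : Fin m, ∃ t : Fin 3, A (φ j t).1 = (φ j t).2 := by
  classical
  set A : Fin n → Bool := fun i => if Vert.lit i true ∈ q.support then true else false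
    with hAdef
  have huniq : ∀ (i : Fin n) (b : Bool), Vert.lit i b ∈ q.support → A i = b := by
    intro i b hmem
    rcases support_struct hn h4 q hq _ hmem with ⟨k, hk⟩ | ⟨i', b', heq, hpos⟩
    · exact absurd hk (by intro h; cases h)
    · injection heq with e1 e2
      subst e1; subst e2
      cases b
      · simp only [hAdef]
        rw [if_neg]
        intro hmem'
        rcases support_struct hn h4 q hq _ hmem' with ⟨k, hk⟩ | ⟨i'', b'', heq2, hpos2⟩
        · cases hk
        · injection heq2 with e1 e2
          subst e1; subst e2
          rw [hpos] at hpos2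
          exact Bool.noConfusion (Vert.lit.inj hpos2).2
      · simp only [hAdef]
        rw [if_pos hmem]
  refine ⟨A, fun j => ?_⟩
  obtain ⟨y, hy, hdy⟩ := hdom (Vert.clause j)
  have hpotle : hPot φ j y ≤ n/2 + 1 := by
    have h1 := pot_le_dist (hPot φ j) (hPot_lip hn h4 j)
      ((gconn (φ := φ) hn h4).preconnected (.clause j) y)
    have h0 : hPot φ j (.clause j) = 0 := by simp [hPot]
    rw [h0] at h1
    omega
  rcases support_struct hn h4 q hq _ hy with ⟨k, hk⟩ | ⟨i, b, heq, -⟩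
  · exfalso
    subst hk
    have hik := k.isLt
    have h2 := maxI_lt (φ := φ) j (by omega)
    simp only [hPot] at hpotle
    split_ifs at hpotle <;> omega
  · subst heq
    have hld0 : litd φ j (i, b) = 0 := by
      simp only [hPot] at hpotle
      omega
    obtain ⟨t, ht⟩ := litd_eq_zero hld0
    exact ⟨t, by rw [ht]; exact huniq i b hy⟩

end GphiAux


/-- A walk `p` is a diametral path: a shortest path between two vertices at distance `diam G`. -/
def IsDiametralPath {V : Type*} (G : SimpleGraph V) {u v : V} (p : G.Walk u v) : Prop :=
  p.length = G.dist u v ∧ G.dist u v = G.diam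

/-- A walk `p` is `k`-dominating: every vertex of `G` is at distance at most `k`
from some vertex of `p`. -/
def IsKDominating {V : Type*} (G : SimpleGraph V) (k : ℕ) {u v : V} (p : G.Walk u v) : Prop :=
  ∀ x : V, ∃ y ∈ p.support, G.dist x y ≤ k

/-- `G` is `k`-laminar: it has a `k`-dominating diametral path. -/
def KLaminar {V : Type*} (G : SimpleGraph V) (k : ℕ) : Prop :=
  ∃ (u v : V) (p : G.Walk u v), IsDiametralPath G p ∧ IsKDominating G k p

/-- For every 3SAT formula `φ` on `n` boolean variables (`n` even, `n ≥ 4`), the graph `G(φ)`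
is `(n/2 + 1)`-laminar if and only if `φ` is satisfiable, i.e. iff there is a truth assignment
`A` of the variables such that every clause contains a literal `(i, b)` with `A i = b`. -/
theorem Gphi_laminar_iff_satisfiable (n m : ℕ) (hn : Even n) (h4 : 4 ≤ n)
    (φ : Fin m → Fin 3 → Fin n × Bool) :
    KLaminar (Gphi n m φ) (n / 2 + 1) ↔
      ∃ A : Fin n → Bool, ∀ j : Fin m, ∃ t : Fin 3, A (φ j t).1 = (φ j t).2 := by
  have hn2 : n % 2 = 0 := Nat.even_iff.mp hn
  constructor
  · rintro ⟨u, v, p, ⟨hl, hd⟩, hdom⟩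
    rw [GphiAux.diam_eq hn2 h4] at hd
    rcases GphiAux.classify (φ := φ) hn2 h4 u v with (⟨h1, h2⟩ | ⟨h1, h2⟩) | ⟨p', hp'⟩
    · subst h1; subst h2
      exact GphiAux.sat_core hn2 h4 p (by omega) hdom
    · subst h1; subst h2
      refine GphiAux.sat_core hn2 h4 p.reverse ?_ ?_
      · rw [SimpleGraph.Walk.length_reverse]
        omega
      · intro x
        obtain ⟨y, hy, hxy⟩ := hdom x
        exact ⟨y, by rw [SimpleGraph.Walk.support_reverse]; exact List.mem_reverse.mpr hy, hxy⟩
    · exfalso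
      have := SimpleGraph.dist_le p'
      omega
  · rintro ⟨A, hA⟩
    obtain ⟨u, v, p, h1, h2⟩ := GphiAux.laminar_of_sat hn2 h4 A hA
    exact ⟨u, v, p, h1, h2⟩
end
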